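/- arXiv:2001.08493 — 3 statements merged into one kernel-verified Lean document; each statement's English description precedes it below -/
import Mathlib

section
/- Let X be a CAT(0) cube complex in which no hyperplane (with its induced cubical structure) has an extremal vertex. Then for any vertex v and any two transverse hyperplanes u, w adjacent to v, there exists a hyperplane t adjacent to v, distinct from u and w, such that t is transverse to u but not transverse to w. -/
open SimpleGraph

variable {V : Type*}

/-- A median graph: combinatorial model of (the 1-skeleton of) a CAT(0) cube complex. -/
def IsMedianGraph (G : SimpleGraph V) : Prop :=
  G.Connected ∧ ∀ x y z : V, ∃! m : V,
    G.dist x m + G.dist m y = G.dist x y ∧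
    G.dist x m + G.dist m z = G.dist x z ∧
    G.dist y m + G.dist m z = G.dist y z

/-- Djoković–Winkler relation on oriented edges of a median graph; hyperplanes are its classes. -/
def Theta (G : SimpleGraph V) (e f : V × V) : Prop :=
  G.dist e.1 f.1 + G.dist e.2 f.2 ≠ G.dist e.1 f.2 + G.dist e.2 f.1

/-- A hyperplane, identified with the set of (oriented) edges crossing it. -/
def IsHyperplane (G : SimpleGraph V) (h : Set (V × V)) : Prop :=
  ∃ e : V × V, G.Adj e.1 e.2 ∧ h = {f | G.Adj f.1 f.2 ∧ Theta G e f}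

/-- The hyperplane `h` is adjacent to the vertex `v` (i.e. `v` lies in the carrier of `h`). -/
def AdjTo (G : SimpleGraph V) (h : Set (V × V)) (v : V) : Prop :=
  ∃ e ∈ h, e.1 = v ∨ e.2 = v

/-- `Wv G v`: the set of hyperplanes adjacent to `v`. -/
def Wv (G : SimpleGraph V) (v : V) : Set (Set (V × V)) :=
  {h | IsHyperplane G h ∧ AdjTo G h v}

/-- Two hyperplanes are in contact if their carriers share a vertex. -/
def Contact (G : SimpleGraph V) (h h' : Set (V × V)) : Prop :=
  ∃ v : V, AdjTo G h v ∧ AdjTo G h' v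

/-- Two hyperplanes are transverse if they cross a common square. -/
def Transverse (G : SimpleGraph V) (h h' : Set (V × V)) : Prop :=
  ∃ a b c d : V, (a, b) ∈ h ∧ (c, d) ∈ h ∧ (a, c) ∈ h' ∧ (b, d) ∈ h' ∧
    G.Adj a b ∧ G.Adj c d ∧ G.Adj a c ∧ G.Adj b d

/-- A clique in the contact graph: a set of hyperplanes whose carriers pairwise intersect. -/
def IsContactClique (G : SimpleGraph V) (C : Set (Set (V × V))) : Prop :=
  (∀ h ∈ C, IsHyperplane G h) ∧ ∀ h ∈ C, ∀ h' ∈ C, h ≠ h' → Contact G h h'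

/-- A maximal clique in the contact graph. -/
def IsMaxContactClique (G : SimpleGraph V) (C : Set (Set (V × V))) : Prop :=
  IsContactClique G C ∧ ∀ C', IsContactClique G C' → C ⊆ C' → C' = C

/-- The link of `v` is a cone, i.e. `v` is an extremal vertex. -/
def LinkIsCone (G : SimpleGraph V) (v : V) : Prop :=
  ∃ h ∈ Wv G v, ∀ h' ∈ Wv G v, h' ≠ h → Transverse G h h'

/-- Uniform local finiteness. -/
def UnifLocFinite (G : SimpleGraph V) : Prop :=
  ∃ N : ℕ, ∀ v : V, (G.neighborSet v).Finite ∧ (G.neighborSet v).ncard ≤ N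

abbrev Hyp (G : SimpleGraph V) := {h : Set (V × V) // IsHyperplane G h}

/-- The contact graph `𝒞(X)`. -/
def contactGraph (G : SimpleGraph V) : SimpleGraph (Hyp G) where
  Adj h h' := h ≠ h' ∧ Contact G h.1 h'.1
  symm := by
    constructor
    rintro h h' ⟨hne, v, hv, hv'⟩
    exact ⟨hne.symm, v, hv', hv⟩
  loopless := by constructor; rintro h ⟨hne, -⟩; exact hne rfl

/-- `Ical G w` = I(w): the hyperplanes whose carrier contains the carrier of `w`,
i.e. the intersection of the sets `Wv G v` over all vertices `v` adjacent to `w`. -/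
def Ical (G : SimpleGraph V) (w : Set (V × V)) : Set (Set (V × V)) :=
  {u | IsHyperplane G u ∧ ∀ v : V, AdjTo G w v → AdjTo G u v}

/-- `Ical0 G w` = I⁰(w): the hyperplanes with the same carrier as `w`. -/
def Ical0 (G : SimpleGraph V) (w : Set (V × V)) : Set (Set (V × V)) :=
  {u | u ∈ Ical G w ∧ w ∈ Ical G u}

/-- The action of a cubical automorphism on sets of edges (e.g. hyperplanes). -/
def hmap (G : SimpleGraph V) (φ : G ≃g G) (h : Set (V × V)) : Set (V × V) :=
  (fun e : V × V => (φ e.1, φ e.2)) '' h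

/-- `π` is the vertex permutation induced by the contact-graph automorphism `ψ` via the
correspondence between vertices and maximal cliques (`ρ(ψ) = π`). -/
def InducesPerm (G : SimpleGraph V) (ψ : contactGraph G ≃g contactGraph G)
    (π : Equiv.Perm V) : Prop :=
  ∀ (v : V) (h : Hyp G), h.1 ∈ Wv G v ↔ (ψ h).1 ∈ Wv G (π v)

/-- The hyperplane `u` is adjacent, inside the cube complex structure of a hyperplane `w`,
to the vertex of `w` given by the edge `e ∈ w`: `u` crosses a square containing `e`. -/
def HypAdjEdge (G : SimpleGraph V) (u : Set (V × V)) (e : V × V) : Prop :=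
  ∃ c d : V, (e.1, c) ∈ u ∧ (e.2, d) ∈ u ∧ G.Adj c d

/-- The link, in the cube complex structure of hyperplane `w`, of the vertex given by
`e ∈ w` is a cone (i.e. this vertex of `w` is extremal). -/
def HypLinkCone (G : SimpleGraph V) (w : Set (V × V)) (e : V × V) : Prop :=
  ∃ u, IsHyperplane G u ∧ u ≠ w ∧ HypAdjEdge G u e ∧
    ∀ u', IsHyperplane G u' → u' ≠ w → HypAdjEdge G u' e → u' ≠ u → Transverse G u u'

/-- No hyperplane of `X` has an extremal vertex. -/
def NoHypExtremalVertex (G : SimpleGraph V) : Prop :=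
  ∀ w, IsHyperplane G w → ∀ e ∈ w, ¬ HypLinkCone G w e

section Aux

variable {G : SimpleGraph V}

/-- `x` is strictly closer to `p` than to `q`. -/
def MSd (G : SimpleGraph V) (p q x : V) : Prop := G.dist x p < G.dist x q

lemma med_exists (hG : IsMedianGraph G) (x y z : V) :
    ∃ m : V, G.dist x m + G.dist m y = G.dist x y ∧
      G.dist x m + G.dist m z = G.dist x z ∧
      G.dist y m + G.dist m z = G.dist y z := (hG.2 x y z).exists

lemma dist_adj_dichotomy (hG : IsMedianGraph G) {p q : V} (hpq : G.Adj p q) (x : V) :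
    G.dist x p + 1 = G.dist x q ∨ G.dist x q + 1 = G.dist x p := by
  obtain ⟨m, h1, h2, h3⟩ := med_exists hG p q x
  have hpq1 : G.dist p q = 1 := dist_eq_one_iff_adj.mpr hpq
  rw [hpq1] at h1
  have hcase : G.dist p m = 0 ∨ G.dist m q = 0 := by omega
  rcases hcase with h | h
  · have hm : m = p := ((hG.1.dist_eq_zero_iff).mp h).symm
    rw [hm] at h3
    left
    have c1 : G.dist q p = G.dist p q := dist_comm
    have c2 : G.dist p x = G.dist x p := dist_comm
    have c3 : G.dist q x = G.dist x q := dist_comm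
    omega
  · have hm : m = q := (hG.1.dist_eq_zero_iff).mp h
    rw [hm] at h2
    right
    have c2 : G.dist p x = G.dist x p := dist_comm
    have c3 : G.dist q x = G.dist x q := dist_comm
    have c4 : G.dist q x = G.dist x q := dist_comm
    omega

lemma msd_swap (hG : IsMedianGraph G) {p q : V} (hpq : G.Adj p q) (x : V) :
    MSd G q p x ↔ ¬ MSd G p q x := by
  rcases dist_adj_dichotomy hG hpq x with h | h <;> unfold MSd <;> omega

lemma exists_adj_toward (hG : IsMedianGraph G) {x y : V} (h : x ≠ y) :
    ∃ x₁, G.Adj x x₁ ∧ G.dist x₁ y + 1 = G.dist x y := by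
  obtain ⟨wlk, hw⟩ := hG.1.exists_walk_length_eq_dist x y
  cases wlk with
  | nil => exact absurd rfl h
  | @cons _ u _ hadj p =>
    refine ⟨u, hadj, ?_⟩
    have h1 : G.dist u y ≤ p.length := dist_le p
    have h2 : G.dist x y ≤ G.dist x u + G.dist u y := hG.1.dist_triangle
    have h3 : G.dist x u = 1 := dist_eq_one_iff_adj.mpr hadj
    simp only [Walk.length_cons] at hw
    omega

lemma exists_flip (hG : IsMedianGraph G) (P : V → Prop) :
    ∀ n : ℕ, ∀ u w : V, G.dist u w = n → P u → ¬ P w →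
    ∃ a b, P a ∧ ¬ P b ∧ G.Adj a b ∧ G.dist u a + G.dist a w = n ∧
      G.dist u b + G.dist b w = n ∧ G.dist u b = G.dist u a + 1 := by
  intro n
  induction n using Nat.strong_induction_on with
  | _ n IH =>
    intro u w hd hu hw
    have hne : u ≠ w := by rintro rfl; exact hw hu
    obtain ⟨u₁, hadj, hu₁⟩ := exists_adj_toward hG hne
    have hd1 : G.dist u u₁ = 1 := dist_eq_one_iff_adj.mpr hadj
    by_cases hPu₁ : P u₁
    · obtain ⟨a, b, h1, h2, h3, h4, h5, h6⟩ :=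
        IH (n-1) (by omega) u₁ w (by omega) hPu₁ hw
      have t1 : G.dist u a ≤ G.dist u u₁ + G.dist u₁ a := hG.1.dist_triangle
      have t2 : G.dist u w ≤ G.dist u a + G.dist a w := hG.1.dist_triangle
      have t3 : G.dist u b ≤ G.dist u u₁ + G.dist u₁ b := hG.1.dist_triangle
      have t4 : G.dist u w ≤ G.dist u b + G.dist b w := hG.1.dist_triangle
      exact ⟨a, b, h1, h2, h3, by omega, by omega, by omega⟩
    · refine ⟨u, u₁, hu, hPu₁, hadj, ?_, ?_, ?_⟩
      · have : G.dist u u = 0 := by simp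
        omega
      · omega
      · have : G.dist u u = 0 := by simp
        omega

lemma no_triangle (hG : IsMedianGraph G) {a b c : V}
    (hab : G.Adj a b) (hbc : G.Adj b c) (hac : G.Adj a c) : False := by
  have h1 : G.dist a b = 1 := dist_eq_one_iff_adj.mpr hab
  have h2 : G.dist a c = 1 := dist_eq_one_iff_adj.mpr hac
  rcases dist_adj_dichotomy hG hbc a with h | h <;> omega

/-- Core of Lemma A: two crossing edges at `a` (with `a` on the `q`-side) coincide. -/
lemma unique_crossing_core (hG : IsMedianGraph G) {p q a b c : V} (hpq : G.Adj p q)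
    (hab : G.Adj a b) (hac : G.Adj a c)
    (ha : ¬ MSd G p q a) (hb : MSd G p q b) (hc : MSd G p q c) : b = c := by
  by_contra hbc
  have da : G.dist a q + 1 = G.dist a p := by
    rcases dist_adj_dichotomy hG hpq a with h | h
    · exact absurd (by unfold MSd; omega) ha
    · exact h
  -- pin down distances of b and c to p,q
  have hbv : G.dist b p + 1 = G.dist a p ∧ G.dist b q = G.dist a p := by
    have d1 : G.dist b p + 1 = G.dist b q ∨ G.dist b q + 1 = G.dist b p := by
      have := dist_adj_dichotomy hG hpq b
      rcases this with h | h
      · exact Or.inl h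
      · exact Or.inr h
    have d2 := dist_adj_dichotomy hG hab p
    have d3 := dist_adj_dichotomy hG hab q
    have c1 : G.dist p a = G.dist a p := dist_comm
    have c2 : G.dist p b = G.dist b p := dist_comm
    have c3 : G.dist q a = G.dist a q := dist_comm
    have c4 : G.dist q b = G.dist b q := dist_comm
    have hb' : G.dist b p < G.dist b q := hb
    rcases d2 with h2 | h2 <;> rcases d3 with h3 | h3 <;> omega
  have hcv : G.dist c p + 1 = G.dist a p ∧ G.dist c q = G.dist a p := by
    have d2 := dist_adj_dichotomy hG hac p
    have d3 := dist_adj_dichotomy hG hac q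
    have c1 : G.dist p a = G.dist a p := dist_comm
    have c2 : G.dist p c = G.dist c p := dist_comm
    have c3 : G.dist q a = G.dist a q := dist_comm
    have c4 : G.dist q c = G.dist c q := dist_comm
    have hc' : G.dist c p < G.dist c q := hc
    rcases d2 with h2 | h2 <;> rcases d3 with h3 | h3 <;> omega
  -- d(b,c) = 2
  have hnadj : ¬ G.Adj b c := fun h => no_triangle hG hab h hac
  have hd2 : G.dist b c = 2 := by
    have t1 : G.dist b c ≤ G.dist b a + G.dist a c := hG.1.dist_triangle
    have e1 : G.dist b a = 1 := dist_eq_one_iff_adj.mpr hab.symm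
    have e2 : G.dist a c = 1 := dist_eq_one_iff_adj.mpr hac
    have e3 : G.dist b c ≠ 0 := fun h => hbc ((hG.1.dist_eq_zero_iff).mp h)
    have e4 : G.dist b c ≠ 1 := fun h => hnadj (dist_eq_one_iff_adj.mp h)
    omega
  obtain ⟨m, m1, m2, m3⟩ := med_exists hG b c p
  have hm : G.dist b m = 1 ∧ G.dist m c = 1 ∧ G.dist m p + 1 = G.dist b p := by
    have c1 : G.dist c m = G.dist m c := dist_comm
    have c2 : G.dist c p = G.dist p c := dist_comm
    have c3 : G.dist b p = G.dist p b := dist_comm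
    omega
  have hadjbm : G.Adj b m := dist_eq_one_iff_adj.mp hm.1
  have hadjmc : G.Adj m c := dist_eq_one_iff_adj.mp hm.2.1
  have dmq := dist_adj_dichotomy hG hpq m
  have dqb := dist_adj_dichotomy hG hadjbm q
  have c5 : G.dist q b = G.dist b q := dist_comm
  have c6 : G.dist q m = G.dist m q := dist_comm
  rcases dmq with h | h
  · -- d(m,q) = d(m,p)+1 = d(a,q) : both a and m are medians of (b,c,q)
    have hmq : G.dist m q = G.dist a q := by omega
    have medm : G.dist b m + G.dist m c = G.dist b c ∧
        G.dist b m + G.dist m q = G.dist b q ∧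
        G.dist c m + G.dist m q = G.dist c q := by
      have c7 : G.dist c m = G.dist m c := dist_comm
      have c8 : G.dist c q = G.dist q c := dist_comm
      omega
    have meda : G.dist b a + G.dist a c = G.dist b c ∧
        G.dist b a + G.dist a q = G.dist b q ∧
        G.dist c a + G.dist a q = G.dist c q := by
      have e1 : G.dist b a = 1 := dist_eq_one_iff_adj.mpr hab.symm
      have e2 : G.dist a c = 1 := dist_eq_one_iff_adj.mpr hac
      have e3 : G.dist c a = 1 := dist_eq_one_iff_adj.mpr hac.symm
      omega
    have : a = m := (hG.2 b c q).unique ⟨meda.1, meda.2.1, meda.2.2⟩ ⟨medm.1, medm.2.1, medm.2.2⟩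
    rw [← this] at hm
    omega
  · omega

/-- Lemma A: two edges at `a` crossing the same wall coincide. -/
lemma unique_crossing (hG : IsMedianGraph G) {p q a b c : V} (hpq : G.Adj p q)
    (hab : G.Adj a b) (hac : G.Adj a c)
    (hcr1 : ¬ (MSd G p q a ↔ MSd G p q b)) (hcr2 : ¬ (MSd G p q a ↔ MSd G p q c)) : b = c := by
  by_cases ha : MSd G p q a
  · have ha' : ¬ MSd G q p a := by rw [msd_swap hG hpq]; tauto
    have hb' : MSd G q p b := by rw [msd_swap hG hpq]; tauto
    have hc' : MSd G q p c := by rw [msd_swap hG hpq]; tauto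
    exact unique_crossing_core hG hpq.symm hab hac ha' hb' hc'
  · exact unique_crossing_core hG hpq hab hac ha (by tauto) (by tauto)

/-- Key step for `no_double_cross`. -/
lemma ndc_step (hG : IsMedianGraph G) {p q : V} (hpq : G.Adj p q) {n : ℕ}
    (IH : ∀ m, m < n → ∀ x x' y' y : V, G.Adj x x' → G.Adj y y' → MSd G p q x → MSd G p q y →
      ¬ MSd G p q x' → ¬ MSd G p q y' → G.dist x y = m → G.dist x' y' + 2 = m →
      G.dist x y' + 1 = m → G.dist x' y + 1 = m → False)
    {x x' y' y : V} (hxx' : G.Adj x x') (hyy' : G.Adj y y')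
    (hx : MSd G p q x) (hy : MSd G p q y) (hx' : ¬ MSd G p q x') (hy' : ¬ MSd G p q y')
    (h1 : G.dist x y = n) (h2 : G.dist x' y' + 2 = n) (h3 : G.dist x y' + 1 = n)
    (h4 : G.dist x' y + 1 = n)
    (hc : G.dist x' y + G.dist y p ≠ G.dist x' p) : False := by
  obtain ⟨m, m1, m2, m3⟩ := med_exists hG x' y p
  -- m is on the p-side
  have hyq : G.dist y p + 1 = G.dist y q := by
    rcases dist_adj_dichotomy hG hpq y with h | h
    · exact h
    · exfalso; unfold MSd at hy; omega
  have hmq := dist_adj_dichotomy hG hpq m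
  have tmq : G.dist y q ≤ G.dist y m + G.dist m q := hG.1.dist_triangle
  have hmside : G.dist m p + 1 = G.dist m q := by rcases hmq with h | h <;> omega
  have hSm : MSd G p q m := by unfold MSd; omega
  have hmy : m ≠ y := by
    rintro rfl; exact hc (by omega)
  have hmx' : G.dist x' m ≠ 0 := by
    intro h0
    have : x' = m := (hG.1.dist_eq_zero_iff).mp h0
    rw [← this] at hSm; exact hx' hSm
  have hdmy : G.dist m y ≠ 0 := by
    intro h0; exact hmy ((hG.1.dist_eq_zero_iff).mp h0)
  -- flip extraction on a geodesic from x' to m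
  obtain ⟨a, b, ha, hb, hadj, f1, f2, f3⟩ :=
    exists_flip hG (fun z => ¬ MSd G p q z) (G.dist x' m) x' m rfl hx' (not_not_intro hSm)
  have hb' : MSd G p q b := not_not.mp hb
  -- distance bookkeeping
  have tay : G.dist a y ≤ G.dist a m + G.dist m y := hG.1.dist_triangle
  have tay' : G.dist x' y ≤ G.dist x' a + G.dist a y := hG.1.dist_triangle
  have hay : G.dist x' a + G.dist a y = G.dist x' y := by omega
  have tby : G.dist b y ≤ G.dist b m + G.dist m y := hG.1.dist_triangle
  have tby' : G.dist x' y ≤ G.dist x' b + G.dist b y := hG.1.dist_triangle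
  have hby : G.dist x' b + G.dist b y = G.dist x' y := by omega
  have dxx' : G.dist x x' = 1 := dist_eq_one_iff_adj.mpr hxx'
  have txa : G.dist x a ≤ G.dist x x' + G.dist x' a := hG.1.dist_triangle
  have txa' : G.dist x y ≤ G.dist x a + G.dist a y := hG.1.dist_triangle
  have hxa : G.dist x a = G.dist x' a + 1 := by omega
  have txb : G.dist x b ≤ G.dist x x' + G.dist x' b := hG.1.dist_triangle
  have txb' : G.dist x y ≤ G.dist x b + G.dist b y := hG.1.dist_triangle
  have hxb : G.dist x b = G.dist x' a + 2 := by omega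
  -- recursion
  exact IH (G.dist x' a + 2) (by omega) x x' a b hxx' hadj.symm hx hb' hx' ha
    hxb (by omega) (by omega) (by omega)

lemma no_double_cross (hG : IsMedianGraph G) {p q : V} (hpq : G.Adj p q) :
    ∀ n : ℕ, ∀ x x' y' y : V, G.Adj x x' → G.Adj y y' → MSd G p q x → MSd G p q y →
      ¬ MSd G p q x' → ¬ MSd G p q y' → G.dist x y = n → G.dist x' y' + 2 = n →
      G.dist x y' + 1 = n → G.dist x' y + 1 = n → False := by
  intro n
  induction n using Nat.strong_induction_on with
  | _ n IH =>
    intro x x' y' y hxx' hyy' hx hy hx' hy' h1 h2 h3 h4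
    by_cases hc1 : G.dist x' y + G.dist y p = G.dist x' p
    · by_cases hc2 : G.dist y' x + G.dist x p = G.dist y' p
      · -- both collinear with p : forces dist x' y' = 0
        have t1 : G.dist x' p ≤ G.dist x' x + G.dist x p := hG.1.dist_triangle
        have t2 : G.dist y' p ≤ G.dist y' y + G.dist y p := hG.1.dist_triangle
        have e1 : G.dist x' x = 1 := dist_eq_one_iff_adj.mpr hxx'.symm
        have e2 : G.dist y' y = 1 := dist_eq_one_iff_adj.mpr hyy'.symm
        have c1 : G.dist y' x = G.dist x y' := dist_comm
        have c2 : G.dist x' y' = G.dist y' x' := dist_comm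
        have hr : G.dist x' y' = 0 := by omega
        have hxy' : x' = y' := (hG.1.dist_eq_zero_iff).mp hr
        subst hxy'
        have hxy : x = y := unique_crossing hG hpq hxx'.symm hyy'.symm
          (by tauto) (by tauto)
        subst hxy
        have : G.dist x x = 0 := by simp
        omega
      · -- mirrored step
        have c1 : G.dist y x = G.dist x y := dist_comm
        have c2 : G.dist y' x' = G.dist x' y' := dist_comm
        have c3 : G.dist y x' = G.dist x' y := dist_comm
        have c4 : G.dist y' x = G.dist x y' := dist_comm
        refine ndc_step hG hpq (fun m hm X X' Y' Y => IH m hm X X' Y' Y)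
          hyy' hxx' hy hx hy' hx' (by omega) (by omega) (by omega) (by omega) hc2
    · exact ndc_step hG hpq IH hxx' hyy' hx hy hx' hy' h1 h2 h3 h4 hc1

/-- Halfspaces are convex. -/
lemma msd_convex (hG : IsMedianGraph G) {p q : V} (hpq : G.Adj p q) {x y z : V}
    (hx : MSd G p q x) (hy : MSd G p q y)
    (hB : G.dist x z + G.dist z y = G.dist x y) : MSd G p q z := by
  by_contra hz
  obtain ⟨a, b, ha, hb, hab, f1, f2, f3⟩ :=
    exists_flip hG (MSd G p q) (G.dist x z) x z rfl hx hz
  obtain ⟨c, c', hc, hc', hcc', g1, g2, g3⟩ :=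
    exists_flip hG (MSd G p q) (G.dist y z) y z rfl hy hz
  have czy : G.dist z y = G.dist y z := dist_comm
  have czc : G.dist z c = G.dist c z := dist_comm
  have czc' : G.dist z c' = G.dist c' z := dist_comm
  -- collinearity of pairs across z
  have tac : G.dist a c ≤ G.dist a z + G.dist z c := hG.1.dist_triangle
  have tac2 : G.dist x y ≤ G.dist x a + G.dist a c + G.dist c y := by
    have u1 : G.dist x y ≤ G.dist x a + G.dist a y := hG.1.dist_triangle
    have u2 : G.dist a y ≤ G.dist a c + G.dist c y := hG.1.dist_triangle
    omega
  have cyc : G.dist c y = G.dist y c := dist_comm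
  have hac : G.dist a c = G.dist a z + G.dist z c := by omega
  have tac' : G.dist a c' ≤ G.dist a z + G.dist z c' := hG.1.dist_triangle
  have tac2' : G.dist x y ≤ G.dist x a + G.dist a c' + G.dist c' y := by
    have u1 : G.dist x y ≤ G.dist x a + G.dist a y := hG.1.dist_triangle
    have u2 : G.dist a y ≤ G.dist a c' + G.dist c' y := hG.1.dist_triangle
    omega
  have cyc' : G.dist c' y = G.dist y c' := dist_comm
  have hac' : G.dist a c' = G.dist a z + G.dist z c' := by omega
  have tbc : G.dist b c ≤ G.dist b z + G.dist z c := hG.1.dist_triangle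
  have tbc2 : G.dist x y ≤ G.dist x b + G.dist b c + G.dist c y := by
    have u1 : G.dist x y ≤ G.dist x b + G.dist b y := hG.1.dist_triangle
    have u2 : G.dist b y ≤ G.dist b c + G.dist c y := hG.1.dist_triangle
    omega
  have hbc : G.dist b c = G.dist b z + G.dist z c := by omega
  have tbc' : G.dist b c' ≤ G.dist b z + G.dist z c' := hG.1.dist_triangle
  have tbc2' : G.dist x y ≤ G.dist x b + G.dist b c' + G.dist c' y := by
    have u1 : G.dist x y ≤ G.dist x b + G.dist b y := hG.1.dist_triangle
    have u2 : G.dist b y ≤ G.dist b c' + G.dist c' y := hG.1.dist_triangle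
    omega
  have hbc' : G.dist b c' = G.dist b z + G.dist z c' := by omega
  exact no_double_cross hG hpq (G.dist a c) a b c' c hab hcc' ha hc hb hc'
    rfl (by omega) (by omega) (by omega)

/-- Convexity for a pair on a common (unknown) side. -/
lemma msd_convex_iff (hG : IsMedianGraph G) {p q : V} (hpq : G.Adj p q) {x y z : V}
    (hxy : MSd G p q x ↔ MSd G p q y)
    (hB : G.dist x z + G.dist z y = G.dist x y) : (MSd G p q z ↔ MSd G p q x) := by
  by_cases hx : MSd G p q x
  · have hz := msd_convex hG hpq hx (hxy.mp hx) hB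
    tauto
  · have hx2 : MSd G q p x := (msd_swap hG hpq x).mpr hx
    have hy2 : MSd G q p y := (msd_swap hG hpq y).mpr (by tauto)
    have hz2 := msd_convex hG hpq.symm hx2 hy2 hB
    have hz3 := (msd_swap hG hpq z).mp hz2
    tauto

lemma not_iff_not_iff {A B C : Prop} (hh1 : ¬ (A ↔ B)) (hh2 : ¬ (C ↔ B)) : A ↔ C := by
  tauto

lemma theta_iff (hG : IsMedianGraph G) {p q a b : V} (hpq : G.Adj p q) (hab : G.Adj a b) :
    Theta G (p, q) (a, b) ↔ ¬ (MSd G p q a ↔ MSd G p q b) := by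
  unfold Theta MSd
  have c1 : G.dist p a = G.dist a p := dist_comm
  have c2 : G.dist p b = G.dist b p := dist_comm
  have c3 : G.dist q a = G.dist a q := dist_comm
  have c4 : G.dist q b = G.dist b q := dist_comm
  rcases dist_adj_dichotomy hG hpq a with h1 | h1 <;>
    rcases dist_adj_dichotomy hG hpq b with h2 | h2 <;>
    · simp only []
      omega

lemma hyp_spec (hG : IsMedianGraph G) {u : Set (V × V)} (hu : IsHyperplane G u) :
    ∃ p q : V, G.Adj p q ∧
      ∀ a b : V, ((a, b) ∈ u ↔ (G.Adj a b ∧ ¬ (MSd G p q a ↔ MSd G p q b))) := by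
  obtain ⟨e, he, rfl⟩ := hu
  refine ⟨e.1, e.2, he, fun a b => ?_⟩
  constructor
  · rintro ⟨h1, h2⟩
    exact ⟨h1, (theta_iff hG he h1).mp h2⟩
  · rintro ⟨h1, h2⟩
    exact ⟨h1, (theta_iff hG he h1).mpr h2⟩

lemma side_iff_closer (hG : IsMedianGraph G) {p q a b : V} (hpq : G.Adj p q)
    (hab : G.Adj a b) (hcross : ¬ (MSd G p q a ↔ MSd G p q b)) (z : V) :
    ((MSd G p q z ↔ MSd G p q a) ↔ G.dist z a + 1 = G.dist z b) := by
  have hab1 : G.dist a b = 1 := dist_eq_one_iff_adj.mpr hab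
  have hba1 : G.dist b a = 1 := dist_eq_one_iff_adj.mpr hab.symm
  rcases dist_adj_dichotomy hG hab z with h | h
  · have hB : G.dist z a + G.dist a b = G.dist z b := by omega
    have hza : MSd G p q z ↔ MSd G p q a := by
      by_contra hne
      have hzb : MSd G p q z ↔ MSd G p q b := by tauto
      have h2 := msd_convex_iff hG hpq hzb hB
      tauto
    exact ⟨fun _ => h, fun _ => hza⟩
  · have hB : G.dist z b + G.dist b a = G.dist z a := by omega
    have hzb : MSd G p q z ↔ MSd G p q b := by
      by_contra hne
      have hza : MSd G p q z ↔ MSd G p q a := by tauto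
      have h2 := msd_convex_iff hG hpq hza hB
      tauto
    constructor
    · intro hza; exact absurd hza (by tauto)
    · intro hd; omega

lemma hyp_eq_of_common_edge (hG : IsMedianGraph G) {u w : Set (V × V)}
    (hu : IsHyperplane G u) (hw : IsHyperplane G w)
    {a b : V} (hau : (a, b) ∈ u) (haw : (a, b) ∈ w) : u = w := by
  obtain ⟨p, q, hpq, hspec⟩ := hyp_spec hG hu
  obtain ⟨p', q', hpq', hspec'⟩ := hyp_spec hG hw
  obtain ⟨hab, hcross⟩ := (hspec a b).mp hau
  obtain ⟨-, hcross'⟩ := (hspec' a b).mp haw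
  have key := side_iff_closer hG hpq hab hcross
  have key' := side_iff_closer hG hpq' hab hcross'
  have aux : ∀ P Q R : Prop, ((P ↔ Q) ↔ ((P ↔ R) ↔ (Q ↔ R))) := by tauto
  ext ⟨g1, g2⟩
  rw [hspec g1 g2, hspec' g1 g2]
  have k1 := key g1
  have k2 := key g2
  have k1' := key' g1
  have k2' := key' g2
  have hXY : (MSd G p q g1 ↔ MSd G p q g2) ↔ (MSd G p' q' g1 ↔ MSd G p' q' g2) := by
    rw [aux (MSd G p q g1) (MSd G p q g2) (MSd G p q a), k1, k2,
      aux (MSd G p' q' g1) (MSd G p' q' g2) (MSd G p' q' a), k1', k2']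
  constructor
  · rintro ⟨hadj, hcr⟩
    exact ⟨hadj, fun hh => hcr (hXY.mpr hh)⟩
  · rintro ⟨hadj, hcr⟩
    exact ⟨hadj, fun hh => hcr (hXY.mp hh)⟩

lemma hyp_rev (hG : IsMedianGraph G) {u : Set (V × V)} (hu : IsHyperplane G u)
    {a b : V} (h : (a, b) ∈ u) : (b, a) ∈ u := by
  obtain ⟨p, q, hpq, hspec⟩ := hyp_spec hG hu
  obtain ⟨hadj, hcr⟩ := (hspec a b).mp h
  exact (hspec b a).mpr ⟨hadj.symm, fun hh => hcr hh.symm⟩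

lemma adjTo_exists (hG : IsMedianGraph G) {u : Set (V × V)} {v : V}
    (hu : IsHyperplane G u) (h : AdjTo G u v) : ∃ x, (v, x) ∈ u := by
  obtain ⟨e, he, h1 | h1⟩ := h
  · have he' : (e.1, e.2) ∈ u := by rwa [Prod.mk.eta]
    subst h1
    exact ⟨e.2, he'⟩
  · have he' : (e.1, e.2) ∈ u := by rwa [Prod.mk.eta]
    subst h1
    exact ⟨e.1, hyp_rev hG hu he'⟩

lemma transverse_symm {h h' : Set (V × V)} (ht : Transverse G h h') : Transverse G h' h := by
  obtain ⟨a, b, c, d, h1, h2, h3, h4, h5, h6, h7, h8⟩ := ht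
  exact ⟨a, c, b, d, h3, h4, h1, h2, h7, h8, h5, h6⟩

lemma transverse_of_hypAdjEdge (hG : IsMedianGraph G) {t u : Set (V × V)}
    (ht : IsHyperplane G t) (hu : IsHyperplane G u) (hne : t ≠ u) {v x : V}
    (hvx : (v, x) ∈ u) (hadj : HypAdjEdge G t (v, x)) : Transverse G t u := by
  obtain ⟨c, d, hvc, hxd, hcd⟩ := hadj
  obtain ⟨p, q, hpq, hspec⟩ := hyp_spec hG hu
  obtain ⟨hvxadj, hcrvx⟩ := (hspec v x).mp hvx
  obtain ⟨p', q', hpq', hspec'⟩ := hyp_spec hG ht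
  obtain ⟨hvc_adj, -⟩ := (hspec' v c).mp hvc
  obtain ⟨hxd_adj, -⟩ := (hspec' x d).mp hxd
  have hc_side : MSd G p q c ↔ MSd G p q v := by
    by_contra hcc
    exact hne (hyp_eq_of_common_edge hG ht hu hvc
      ((hspec v c).mpr ⟨hvc_adj, fun hh => hcc hh.symm⟩))
  have hd_side : MSd G p q d ↔ MSd G p q x := by
    by_contra hdd
    exact hne (hyp_eq_of_common_edge hG ht hu hxd
      ((hspec x d).mpr ⟨hxd_adj, fun hh => hdd hh.symm⟩))
  have hcd_mem : (c, d) ∈ u := (hspec c d).mpr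
    ⟨hcd, fun hh => hcrvx (hc_side.symm.trans (hh.trans hd_side))⟩
  exact ⟨v, c, x, d, hvc, hxd, hvx, hcd_mem, hvc_adj, hxd_adj, hvxadj, hcd⟩

lemma corner (hG : IsMedianGraph G) {u w : Set (V × V)}
    (hu : IsHyperplane G u) (hw : IsHyperplane G w) (hne : u ≠ w) {v x y : V}
    (hvx : (v, x) ∈ u) (hvy : (v, y) ∈ w) (htr : Transverse G u w) :
    HypAdjEdge G w (v, x) := by
  obtain ⟨p, q, hpq, hspec⟩ := hyp_spec hG hu
  obtain ⟨p', q', hpq', hspec'⟩ := hyp_spec hG hw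
  obtain ⟨hvx_adj, hvx_cr⟩ := (hspec v x).mp hvx
  obtain ⟨hvy_adj, hvy_cr⟩ := (hspec' v y).mp hvy
  have hx_w : MSd G p' q' x ↔ MSd G p' q' v := by
    by_contra h
    exact hne (hyp_eq_of_common_edge hG hu hw hvx
      ((hspec' v x).mpr ⟨hvx_adj, fun hh => h hh.symm⟩))
  have hy_u : MSd G p q y ↔ MSd G p q v := by
    by_contra h
    exact hne (hyp_eq_of_common_edge hG hu hw
      ((hspec v y).mpr ⟨hvy_adj, fun hh => h hh.symm⟩) hvy)
  obtain ⟨a, b, c, d, hab_u, hcd_u, hac_w, hbd_w, hAab, hAcd, hAac, hAbd⟩ := htr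
  obtain ⟨-, hab_cr⟩ := (hspec a b).mp hab_u
  obtain ⟨-, hcd_cr⟩ := (hspec c d).mp hcd_u
  obtain ⟨-, hac_cr⟩ := (hspec' a c).mp hac_w
  obtain ⟨-, hbd_cr⟩ := (hspec' b d).mp hbd_w
  have hac_u : MSd G p q a ↔ MSd G p q c := by
    by_contra h
    exact hne (hyp_eq_of_common_edge hG hu hw ((hspec a c).mpr ⟨hAac, h⟩) hac_w)
  have hbd_u : MSd G p q b ↔ MSd G p q d := by
    by_contra h
    exact hne (hyp_eq_of_common_edge hG hu hw ((hspec b d).mpr ⟨hAbd, h⟩) hbd_w)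
  have hab_w : MSd G p' q' a ↔ MSd G p' q' b := by
    by_contra h
    exact hne (hyp_eq_of_common_edge hG hu hw hab_u ((hspec' a b).mpr ⟨hAab, h⟩))
  have hcd_w : MSd G p' q' c ↔ MSd G p' q' d := by
    by_contra h
    exact hne (hyp_eq_of_common_edge hG hu hw hcd_u ((hspec' c d).mpr ⟨hAcd, h⟩))
  -- pick the corner g in the quadrant opposite to v
  obtain ⟨g, hgU, hgW⟩ : ∃ g, (¬ (MSd G p q g ↔ MSd G p q v)) ∧
      (¬ (MSd G p' q' g ↔ MSd G p' q' v)) := by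
    by_cases h1 : MSd G p q v ↔ MSd G p q a <;> by_cases h2 : MSd G p' q' v ↔ MSd G p' q' a
    · exact ⟨d, fun hh => hab_cr (hbd_u.trans (hh.trans h1)).symm,
        fun hh => hac_cr (hcd_w.trans (hh.trans h2)).symm⟩
    · exact ⟨b, fun hh => hab_cr (hh.trans h1).symm,
        fun hh => h2 (hab_w.trans hh).symm⟩
    · exact ⟨c, fun hh => h1 (hac_u.trans hh).symm,
        fun hh => hac_cr (hh.trans h2).symm⟩
    · exact ⟨a, fun hh => h1 hh.symm, fun hh => h2 hh.symm⟩
  -- x and y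
  have hxy : x ≠ y := by
    intro h
    subst h
    exact hne (hyp_eq_of_common_edge hG hu hw hvx hvy)
  have hnadj : ¬ G.Adj x y := by
    intro h
    have hxy_u : (x, y) ∈ u := (hspec x y).mpr
      ⟨h, fun hh => hvx_cr (hh.trans hy_u).symm⟩
    have hxy_w : (x, y) ∈ w := (hspec' x y).mpr
      ⟨h, fun hh => hvy_cr (hx_w.symm.trans hh)⟩
    exact hne (hyp_eq_of_common_edge hG hu hw hxy_u hxy_w)
  have dxy : G.dist x y = 2 := by
    have t1 : G.dist x y ≤ G.dist x v + G.dist v y := hG.1.dist_triangle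
    have e1 : G.dist x v = 1 := dist_eq_one_iff_adj.mpr hvx_adj.symm
    have e2 : G.dist v y = 1 := dist_eq_one_iff_adj.mpr hvy_adj
    have e3 : G.dist x y ≠ 0 := fun h0 => hxy ((hG.1.dist_eq_zero_iff).mp h0)
    have e4 : G.dist x y ≠ 1 := fun h1 => hnadj (dist_eq_one_iff_adj.mp h1)
    omega
  obtain ⟨z, m1, m2, m3⟩ := med_exists hG x y g
  have hyg_w : MSd G p' q' y ↔ MSd G p' q' g :=
    not_iff_not_iff (fun hh => hvy_cr hh.symm) hgW
  have hxg_u : MSd G p q x ↔ MSd G p q g :=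
    not_iff_not_iff (fun hh => hvx_cr hh.symm) hgU
  have hzx : z ≠ x := by
    intro h
    subst h
    have hcv := msd_convex_iff hG hpq' hyg_w m3
    exact hvy_cr (hx_w.symm.trans hcv)
  have hzy : z ≠ y := by
    intro h
    subst h
    have hcv := msd_convex_iff hG hpq hxg_u m2
    exact hvx_cr (hy_u.symm.trans hcv)
  have dxz : G.dist x z = 1 ∧ G.dist z y = 1 := by
    have e1 : G.dist x z ≠ 0 := fun h0 => hzx ((hG.1.dist_eq_zero_iff).mp h0).symm
    have e2 : G.dist z y ≠ 0 := fun h0 => hzy ((hG.1.dist_eq_zero_iff).mp h0)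
    omega
  have hAxz : G.Adj x z := dist_eq_one_iff_adj.mp dxz.1
  have hAzy : G.Adj z y := dist_eq_one_iff_adj.mp dxz.2
  have hz_w : MSd G p' q' z ↔ MSd G p' q' y := msd_convex_iff hG hpq' hyg_w m3
  have hxz_w : (x, z) ∈ w := (hspec' x z).mpr
    ⟨hAxz, fun hh => hvy_cr (hx_w.symm.trans (hh.trans hz_w))⟩
  exact ⟨y, z, hvy, hxz_w, hAzy.symm⟩

end Aux

/-- if no hyperplane of `X` has an extremal vertex, then for any vertex `v`
and transverse hyperplanes `u, w` adjacent to `v` there is a hyperplane `t` adjacent to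
`v`, distinct from `u` and `w`, transverse to `u` but not to `w`. -/
theorem exists_transverse_not_transverse (G : SimpleGraph V) (hG : IsMedianGraph G)
    (hnoext : NoHypExtremalVertex G) (v : V) (u w : Set (V × V))
    (hu : u ∈ Wv G v) (hw : w ∈ Wv G v) (huw : Transverse G u w) (hne : u ≠ w) :
    ∃ t ∈ Wv G v, t ≠ u ∧ t ≠ w ∧ Transverse G t u ∧ ¬ Transverse G t w := by
  obtain ⟨huH, huA⟩ := hu
  obtain ⟨hwH, hwA⟩ := hw
  obtain ⟨x, hvx⟩ := adjTo_exists hG huH huA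
  obtain ⟨y, hvy⟩ := adjTo_exists hG hwH hwA
  have hcorner : HypAdjEdge G w (v, x) := corner hG huH hwH hne hvx hvy huw
  have hnl := hnoext u huH (v, x) hvx
  rw [HypLinkCone] at hnl
  push_neg at hnl
  obtain ⟨t, htH, htne_u, htadj, htne_w, hnt⟩ := hnl w hwH (Ne.symm hne) hcorner
  refine ⟨t, ⟨htH, ?_⟩, htne_u, htne_w,
    transverse_of_hypAdjEdge hG htH huH htne_u hvx htadj,
    fun h => hnt (transverse_symm h)⟩
  obtain ⟨c, d, hvc, hxd, -⟩ := htadj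
  exact ⟨(v, c), hvc, Or.inl rfl⟩
end

section
/- Let X be a CAT(0) cube complex in which no hyperplane has extremal vertices. Then two vertices v, w of X are adjacent (joined by an edge) if and only if there is no vertex x ∉ {v, w} with W_v ∩ W_w ⊆ W_v ∩ W_x. -/
open SimpleGraph

variable {V : Type*}

def MedH (G : SimpleGraph V) : Prop := ∀ x y z : V, ∃! m : V,
    G.dist x m + G.dist m y = G.dist x y ∧
    G.dist x m + G.dist m z = G.dist x z ∧
    G.dist y m + G.dist m z = G.dist y z

namespace MedAux

variable {G : SimpleGraph V}

lemma d0 (hc : G.Connected) {a b : V} : G.dist a b = 0 ↔ a = b :=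
  hc.dist_eq_zero_iff

lemma dadj {a b : V} (h : G.Adj a b) : G.dist a b = 1 :=
  SimpleGraph.dist_eq_one_iff_adj.mpr h

lemma adj_of_d1 {a b : V} (h : G.dist a b = 1) : G.Adj a b :=
  SimpleGraph.dist_eq_one_iff_adj.mp h

lemma tri (hc : G.Connected) (a b c : V) : G.dist a c ≤ G.dist a b + G.dist b c :=
  hc.dist_triangle

lemma dcomm (a b : V) : G.dist a b = G.dist b a := SimpleGraph.dist_comm

lemma step (hc : G.Connected) {a b : V} {n : ℕ} (h : G.dist a b = n + 1) :
    ∃ c, G.Adj a c ∧ G.dist c b = n := by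
  obtain ⟨p, hp⟩ := hc.exists_walk_length_eq_dist a b
  rw [h] at hp
  cases p with
  | nil => simp at hp
  | @cons _ c _ hadj q =>
      refine ⟨c, hadj, le_antisymm ?_ ?_⟩
      · calc G.dist c b ≤ q.length := SimpleGraph.dist_le q
          _ = n := by simpa using hp
      · have t := tri hc a c b
        have := dadj hadj
        omega

lemma dist2 (hc : G.Connected) {a c : V} (hne : a ≠ c) (hnadj : ¬ G.Adj a c)
    (hle : G.dist a c ≤ 2) : G.dist a c = 2 := by
  have h0 : G.dist a c ≠ 0 := fun h => hne ((d0 hc).mp h)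
  have h1 : G.dist a c ≠ 1 := fun h => hnadj (adj_of_d1 h)
  omega

lemma side_dich (hc : G.Connected) (hm : MedH G) {a b : V} (hab : G.Adj a b) (y : V) :
    G.dist y b = G.dist y a + 1 ∨ G.dist y a = G.dist y b + 1 := by
  obtain ⟨m, ⟨h1, h2, h3⟩, -⟩ := hm y a b
  rw [dadj hab] at h3
  rcases Nat.le_one_iff_eq_zero_or_eq_one.mp (by omega : G.dist a m ≤ 1) with h | h
  · have : a = m := (d0 hc).mp h
    subst this
    rw [dadj hab] at h2
    omega
  · have hmb : G.dist m b = 0 := by omega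
    have hb : m = b := (d0 hc).mp hmb
    rw [hb] at h1
    have : G.dist b a = 1 := by rw [dcomm]; exact dadj hab
    omega

lemma no_tri (hc : G.Connected) (hm : MedH G) {a b c : V}
    (h1 : G.Adj a b) (h2 : G.Adj b c) (h3 : G.Adj a c) : False := by
  obtain ⟨m, ⟨e1, e2, e3⟩, -⟩ := hm a b c
  rw [dadj h1] at e1
  rw [dadj h3] at e2
  rw [dadj h2] at e3
  rcases Nat.le_one_iff_eq_zero_or_eq_one.mp (by omega : G.dist a m ≤ 1) with h | h
  · have : a = m := (d0 hc).mp h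
    subst this
    have hba : G.dist b a = 1 := by rw [dcomm]; exact dadj h1
    omega
  · have hmb : G.dist m b = 0 := by omega
    have hb : m = b := (d0 hc).mp hmb
    rw [hb] at e2
    have := dadj h1
    have := dadj h2
    omega

end MedAux

-- continuation, appended to aux1 content for testing
structure Cross (G : SimpleGraph V) (a b u z : V) : Prop where
  hab : G.Adj a b
  huz : G.Adj u z
  hu : G.dist u b = G.dist u a + 1
  hz : G.dist z a = G.dist z b + 1

namespace MedAux
variable {G : SimpleGraph V}

lemma cross_dists (hc : G.Connected) {a b u z : V} (h : Cross G a b u z) :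
    G.dist u a = G.dist z b ∧ G.dist u b = G.dist z a := by
  have t1 := tri hc u z b
  have t2 := tri hc z u a
  have d1 : G.dist u z = 1 := dadj h.huz
  have d2 : G.dist z u = 1 := by rw [dcomm]; exact d1
  have := h.hu; have := h.hz
  omega

/-- The key uniqueness machine: a far-side vertex cannot have two near-side
neighbours at mutual distance 2. -/
lemma machine (hc : G.Connected) (hm : MedH G) {a b z z1 z2 : V} (hab : G.Adj a b)
    (hzb : G.dist z a = G.dist z b + 1)
    (h1 : G.Adj z1 z) (h2 : G.Adj z2 z)
    (h1a : G.dist z1 b = G.dist z1 a + 1) (h2a : G.dist z2 b = G.dist z2 a + 1)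
    (h12 : G.dist z1 z2 = 2) : False := by
  have c1 := cross_dists hc ⟨hab, h1, h1a, hzb⟩
  have c2 := cross_dists hc ⟨hab, h2, h2a, hzb⟩
  -- s := dist z b ; dist z1 a = dist z2 a = s, dist z1 b = dist z2 b = s+1
  have hs1 : 1 ≤ G.dist z b := by
    by_contra h
    have h0 : G.dist z b = 0 := by omega
    have e1 : z1 = a := (d0 hc).mp (by omega : G.dist z1 a = 0)
    have e2 : z2 = a := (d0 hc).mp (by omega : G.dist z2 a = 0)
    rw [e1, e2] at h12
    rw [(d0 hc).mpr rfl] at h12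
    omega
  obtain ⟨m, ⟨e1, e2, e3⟩, -⟩ := hm z1 z2 a
  rw [h12] at e1
  have hz2m : G.dist z2 m = G.dist m z2 := dcomm _ _
  have hmne1 : G.dist z1 m ≠ 0 := by
    intro h0
    have : z1 = m := (d0 hc).mp h0
    rw [← this] at e3
    have : G.dist z2 z1 = 2 := by rw [dcomm]; exact h12
    omega
  have hmne2 : G.dist m z2 ≠ 0 := by
    intro h0
    have : m = z2 := (d0 hc).mp h0
    rw [this] at e2
    omega
  have hz1m : G.dist z1 m = 1 := by omega
  have hmz2 : G.dist m z2 = 1 := by omega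
  have hma : G.dist m a + 1 = G.dist z1 a := by omega
  have hmb : G.dist m b = G.dist z b := by
    have t1 := tri hc z1 m b
    have t2 := tri hc m a b
    have := dadj hab
    omega
  -- both z and m are medians of (z1, z2, b)
  obtain ⟨m', hm', huniq⟩ := hm z1 z2 b
  have hcz : z = m' := by
    apply huniq
    refine ⟨?_, ?_, ?_⟩
    · have hz1z : G.dist z1 z = 1 := dadj h1
      have hzz2 : G.dist z z2 = 1 := by rw [dcomm]; exact dadj h2
      omega
    · have hz1z : G.dist z1 z = 1 := dadj h1
      omega
    · have hzz2 : G.dist z2 z = 1 := dadj h2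
      have : G.dist z2 z = G.dist z2 z := rfl
      omega
  have hcm : m = m' := by
    apply huniq
    refine ⟨?_, ?_, ?_⟩
    · omega
    · omega
    · omega
  have : z = m := hcz.trans hcm.symm
  rw [this] at hzb
  omega

/-- Moving one step towards `a` keeps you on the `a`-side. -/
lemma stay (hc : G.Connected) (hm : MedH G) {a b y y' : V} (hab : G.Adj a b)
    (hy : G.dist y b = G.dist y a + 1) (hadj : G.Adj y y')
    (hy' : G.dist y' a + 1 = G.dist y a) : G.dist y' b = G.dist y' a + 1 := by
  rcases side_dich hc hm hab y' with h | h
  · exact h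
  · exfalso
    have := (cross_dists hc ⟨hab, hadj, hy, h⟩).1
    omega

/-- Ladder lemma: a crossing edge at distance `s+1` from the base yields a parallel
crossing edge one step closer, spanning a square. -/
lemma ladder (hc : G.Connected) (hm : MedH G) {a b u z : V} (h : Cross G a b u z)
    {s : ℕ} (hs : G.dist u a = s + 1) :
    ∃ u' m', G.Adj u u' ∧ G.Adj z m' ∧ G.Adj u' m' ∧ Cross G a b u' m' ∧
      G.dist u' a = s ∧ G.dist u m' = 2 := by
  obtain ⟨u', huu', hu'a⟩ := step hc hs
  have hu'side : G.dist u' b = G.dist u' a + 1 :=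
    stay hc hm h.hab h.hu huu' (by omega)
  obtain ⟨cd1, cd2⟩ := cross_dists hc h
  -- dist z b = s+1, dist z a = s+2, dist u b = s+2, dist u' b = s+1
  have hza : G.dist z a = G.dist z b + 1 := h.hz
  have hub : G.dist u b = G.dist u a + 1 := h.hu
  have hu'z : G.dist u' z = 2 := by
    apply dist2 hc
    · intro he; rw [he] at hu'side; omega
    · intro hadj; exact no_tri hc hm huu' hadj h.huz
    · have t := tri hc u' u z
      have : G.dist u' u = 1 := by rw [dcomm]; exact dadj huu'
      have := dadj h.huz
      omega
  obtain ⟨m', ⟨e1, e2, e3⟩, -⟩ := hm u' z b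
  rw [hu'z] at e1
  have hne1 : G.dist u' m' ≠ 0 := by
    intro h0
    have : u' = m' := (d0 hc).mp h0
    rw [← this] at e3
    have : G.dist z u' = 2 := by rw [dcomm]; exact hu'z
    omega
  have hne2 : G.dist m' z ≠ 0 := by
    intro h0
    have : m' = z := (d0 hc).mp h0
    rw [this] at e2
    omega
  have hu'm' : G.dist u' m' = 1 := by omega
  have hm'z : G.dist m' z = 1 := by omega
  have hm'b : G.dist m' b + 1 = G.dist u' b := by omega
  have hm'a : G.dist m' a = G.dist m' b + 1 := by
    have t1 := tri hc z m' a
    have t2 := tri hc m' b a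
    have hzm' : G.dist z m' = 1 := by rw [dcomm]; exact hm'z
    have : G.dist b a = 1 := by rw [dcomm]; exact dadj h.hab
    omega
  have hum' : G.dist u m' = 2 := by
    have t1 := tri hc u m' b
    have t2 := tri hc u z m'
    have := dadj h.huz
    have hzm' : G.dist z m' = 1 := by rw [dcomm]; exact hm'z
    omega
  exact ⟨u', m', huu', adj_of_d1 (by rw [dcomm]; exact hm'z), adj_of_d1 hu'm',
    ⟨h.hab, adj_of_d1 hu'm', hu'side, hm'a⟩, hu'a, hum'⟩

end MedAux

namespace MedAux
variable {G : SimpleGraph V}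

/-- Side transfer: relative to a crossing edge `(u,z)` of the wall of `(a,b)`,
every `a`-side vertex is on the `u`-side. -/
lemma claimG (hc : G.Connected) (hm : MedH G) {a b : V} :
    ∀ s : ℕ, ∀ u z : V, Cross G a b u z → G.dist u a = s →
      ∀ y, G.dist y b = G.dist y a + 1 → G.dist y z = G.dist y u + 1 := by
  intro s
  induction s using Nat.strong_induction_on with
  | _ s IH =>
    intro u z hx hs y hy
    match s, hs with
    | 0, hs =>
      have hua : u = a := (d0 hc).mp hs
      have hzb : z = b := (d0 hc).mp (by
        have := (cross_dists hc hx).1; omega)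
      rw [hua, hzb]; exact hy
    | (s' + 1), hs =>
      obtain ⟨u', m', huu', hzm', hu'm', hx', hu'a, hum'⟩ := ladder hc hm hx hs
      have ih := IH s' (by omega) u' m' hx' hu'a y hy
      rcases side_dich hc hm hx.huz y with hgood | hbad
      · exact hgood
      exfalso
      have t1 := tri hc y u' u
      have t2 := tri hc y u u'
      have t3 := tri hc y m' z
      have t4 := tri hc y z m'
      have du'u : G.dist u' u = 1 := by rw [dcomm]; exact dadj huu'
      have duu' : G.dist u u' = 1 := dadj huu'
      have dzm' : G.dist z m' = 1 := dadj hzm'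
      have dm'z : G.dist m' z = 1 := by rw [dcomm]; exact dzm'
      -- dist y u' = dist y z, dist y m' = dist y u
      have key1 : G.dist y u' = G.dist y z := by omega
      have key2 : G.dist y m' = G.dist y u := by omega
      obtain ⟨q, hq, huniq⟩ := hm y u m'
      have hz' : z = q := by
        apply huniq
        refine ⟨?_, ?_, ?_⟩
        · have : G.dist z u = 1 := by rw [dcomm]; exact dadj hx.huz
          omega
        · omega
        · have := dadj hx.huz
          omega
      have hu'' : u' = q := by
        apply huniq
        refine ⟨?_, ?_, ?_⟩
        · omega
        · have := dadj hu'm'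
          omega
        · have := dadj hu'm'
          omega
      have hzu : z = u' := hz'.trans hu''.symm
      have h1 := hx.hz
      have h2 := hx'.hu
      rw [hzu] at h1
      omega

lemma transfer (hc : G.Connected) (hm : MedH G) {a b u z : V} (h : Cross G a b u z) (y : V) :
    G.dist y b = G.dist y a + 1 ↔ G.dist y z = G.dist y u + 1 := by
  constructor
  · exact fun hy => claimG hc hm _ u z h rfl y hy
  · intro hy
    rcases side_dich hc hm h.hab y with h' | h'
    · exact h'
    · exfalso
      have hsw : Cross G b a z u := ⟨h.hab.symm, h.huz.symm, h.hz, h.hu⟩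
      have := claimG hc hm _ z u hsw rfl y h'
      omega

lemma transfer' (hc : G.Connected) (hm : MedH G) {a b u z : V} (h : Cross G a b u z) (y : V) :
    (G.dist y b = G.dist y a + 1 ∧ G.dist y z = G.dist y u + 1) ∨
    (G.dist y a = G.dist y b + 1 ∧ G.dist y u = G.dist y z + 1) := by
  rcases side_dich hc hm h.hab y with h1 | h1
  · exact Or.inl ⟨h1, (transfer hc hm h y).mp h1⟩
  · refine Or.inr ⟨h1, ?_⟩
    rcases side_dich hc hm h.huz y with h2 | h2
    · exfalso; have := (transfer hc hm h y).mpr h2; omega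
    · exact h2

lemma theta_iff (hc : G.Connected) (hm : MedH G) {a b p q : V}
    (hab : G.Adj a b) (hpq : G.Adj p q) :
    Theta G (a, b) (p, q) ↔
      ((G.dist p b = G.dist p a + 1 ∧ G.dist q a = G.dist q b + 1) ∨
       (G.dist p a = G.dist p b + 1 ∧ G.dist q b = G.dist q a + 1)) := by
  have hrfl : Theta G (a, b) (p, q) ↔
      G.dist a p + G.dist b q ≠ G.dist a q + G.dist b p := Iff.rfl
  rw [hrfl, dcomm a p, dcomm b q, dcomm a q, dcomm b p]
  rcases side_dich hc hm hab p with hp | hp <;> rcases side_dich hc hm hab q with hq | hq <;>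
    constructor <;> intro h <;> omega

end MedAux

namespace MedAux
variable {G : SimpleGraph V}

/-- The Θ-class of the oriented edge `(a,b)`. -/
def cls (G : SimpleGraph V) (a b : V) : Set (V × V) :=
  {f | G.Adj f.1 f.2 ∧ Theta G (a, b) f}

lemma mem_cls {a b p q : V} :
    (p, q) ∈ cls G a b ↔ G.Adj p q ∧ Theta G (a, b) (p, q) := Iff.rfl

lemma cls_hyp {a b : V} (hab : G.Adj a b) : IsHyperplane G (cls G a b) :=
  ⟨(a, b), hab, rfl⟩

lemma hyp_ex {h : Set (V × V)} (hh : IsHyperplane G h) :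
    ∃ a b, G.Adj a b ∧ h = cls G a b := by
  obtain ⟨⟨a, b⟩, hadj, heq⟩ := hh
  exact ⟨a, b, hadj, heq⟩

lemma self_mem {a b : V} (hab : G.Adj a b) : (a, b) ∈ cls G a b := by
  refine ⟨hab, ?_⟩
  have h : Theta G (a,b) (a,b) ↔
      G.dist a a + G.dist b b ≠ G.dist a b + G.dist b a := Iff.rfl
  rw [h, G.dist_self, G.dist_self, dadj hab, dcomm b a, dadj hab]
  omega

lemma swap_mem {a b p q : V} (h : (p, q) ∈ cls G a b) : (q, p) ∈ cls G a b := by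
  obtain ⟨hadj, ht⟩ := h
  refine ⟨hadj.symm, ?_⟩
  have h1 : Theta G (a,b) (p,q) ↔
      G.dist a p + G.dist b q ≠ G.dist a q + G.dist b p := Iff.rfl
  have h2 : Theta G (a,b) (q,p) ↔
      G.dist a q + G.dist b p ≠ G.dist a p + G.dist b q := Iff.rfl
  rw [h1] at ht; rw [h2]; omega

lemma mem_cls_iff (hc : G.Connected) (hm : MedH G) {a b p q : V} (hab : G.Adj a b) :
    (p, q) ∈ cls G a b ↔ (G.Adj p q ∧
      ((G.dist p b = G.dist p a + 1 ∧ G.dist q a = G.dist q b + 1) ∨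
       (G.dist p a = G.dist p b + 1 ∧ G.dist q b = G.dist q a + 1))) := by
  rw [mem_cls]
  constructor
  · rintro ⟨hpq, ht⟩; exact ⟨hpq, (theta_iff hc hm hab hpq).mp ht⟩
  · rintro ⟨hpq, hs⟩; exact ⟨hpq, (theta_iff hc hm hab hpq).mpr hs⟩

/-- Rebasing a Θ-class at any of its edges. -/
lemma rebase (hc : G.Connected) (hm : MedH G) {a b u z : V} (hab : G.Adj a b)
    (huz : (u, z) ∈ cls G a b) : cls G a b = cls G u z := by
  have huzadj : G.Adj u z := huz.1
  have hor := ((mem_cls_iff hc hm hab).mp huz).2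
  ext ⟨p, q⟩
  rw [mem_cls_iff hc hm hab, mem_cls_iff hc hm huzadj]
  rcases hor with ⟨h1, h2⟩ | ⟨h1, h2⟩
  · have hcr : Cross G a b u z := ⟨hab, huzadj, h1, h2⟩
    have tp := transfer' hc hm hcr p
    have tq := transfer' hc hm hcr q
    constructor <;> rintro ⟨hpq, hs⟩ <;> exact ⟨hpq, by omega⟩
  · have hcr : Cross G a b z u := ⟨hab, huzadj.symm, h2, h1⟩
    have tp := transfer' hc hm hcr p
    have tq := transfer' hc hm hcr q
    constructor <;> rintro ⟨hpq, hs⟩ <;> exact ⟨hpq, by omega⟩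

lemma cls_eq_of_mem {a b u z : V} (hc : G.Connected) (hm : MedH G)
    (hab : G.Adj a b) (huz : G.Adj u z) {f : V × V}
    (h1 : f ∈ cls G a b) (h2 : f ∈ cls G u z) : cls G a b = cls G u z := by
  obtain ⟨p, q⟩ := f
  rw [rebase hc hm hab h1, rebase hc hm huz h2]

lemma adjTo_ex (hc : G.Connected) {a b v : V} (h : AdjTo G (cls G a b) v) :
    ∃ v', G.Adj v v' ∧ (v, v') ∈ cls G a b := by
  obtain ⟨⟨p, q⟩, hpq, hor⟩ := h
  rcases hor with h | h
  · cases h; exact ⟨q, hpq.1, hpq⟩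
  · cases h; exact ⟨p, hpq.1.symm, swap_mem hpq⟩

/-- Key construction: if `z` is a near-side neighbour of `a` on a geodesic towards a
far-side vertex `W`, then `z` has a far-side neighbour `μ` (adjacent also to `b`). -/
lemma lemK (hc : G.Connected) (hm : MedH G) {a b z W : V} (hab : G.Adj a b)
    (haz : G.Adj a z) (hza : G.dist z b = G.dist z a + 1)
    (hW : G.dist W a = G.dist W b + 1) (hbtw : 1 + G.dist z W = G.dist a W) :
    ∃ μ, G.Adj z μ ∧ G.Adj μ b ∧ G.dist μ a = G.dist μ b + 1 := by
  have hza1 : G.dist z a = 1 := by rw [dcomm]; exact dadj haz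
  have hzb : G.dist z b = 2 := by omega
  have hr : 1 ≤ G.dist z W := by
    rcases Nat.eq_zero_or_pos (G.dist z W) with h0 | h; swap; · exact h
    exfalso
    have : z = W := (d0 hc).mp h0
    rw [← this] at hW
    omega
  have hWa : G.dist W a = G.dist a W := dcomm _ _
  have hWb : G.dist W b = G.dist z W := by omega
  have hbW : G.dist b W = G.dist W b := dcomm _ _
  obtain ⟨μ, ⟨e1, e2, e3⟩, -⟩ := hm z b W
  rw [hzb] at e1
  have hne1 : G.dist z μ ≠ 0 := by
    intro h0
    have : z = μ := (d0 hc).mp h0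
    rw [← this] at e3
    have : G.dist b z = 2 := by rw [dcomm]; exact hzb
    omega
  have hne2 : G.dist μ b ≠ 0 := by
    intro h0
    have : μ = b := (d0 hc).mp h0
    rw [this] at e2
    omega
  have hzμ : G.dist z μ = 1 := by omega
  have hμb : G.dist μ b = 1 := by omega
  have hμW : 1 + G.dist μ W = G.dist z W := by omega
  rcases side_dich hc hm hab μ with hside | hside
  · -- μ is a-side: contradiction via the machine
    exfalso
    have haμ : G.dist a μ = 2 := by
      apply dist2 hc
      · intro he
        rw [← he] at hμW
        have : G.dist a W = G.dist W a := dcomm _ _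
        omega
      · intro hadj; exact no_tri hc hm haz (adj_of_d1 hzμ) hadj
      · have t := tri hc a z μ
        have := dadj haz
        omega
    have hba : G.dist b a = G.dist b b + 1 := by
      rw [G.dist_self]
      have : G.dist b a = 1 := by rw [dcomm]; exact dadj hab
      omega
    have hab' : G.dist a b = G.dist a a + 1 := by
      rw [G.dist_self]
      have := dadj hab
      omega
    exact machine hc hm hab hba hab (adj_of_d1 hμb) hab' hside haμ
  · exact ⟨μ, adj_of_d1 hzμ, adj_of_d1 hμb, hside⟩

end MedAux

namespace MedAux
variable {G : SimpleGraph V}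

lemma conv_step (hc : G.Connected) (hm : MedH G) {h : Set (V × V)} {p q z1 : V}
    (hh : IsHyperplane G h) (hp : AdjTo G h p) (hq : AdjTo G h q)
    (hadj : G.Adj p z1) (hbtw : 1 + G.dist z1 q = G.dist p q) : AdjTo G h z1 := by
  obtain ⟨a0, b0, hab0, rfl⟩ := hyp_ex hh
  obtain ⟨p', hpp', hpmem⟩ := adjTo_ex hc hp
  have hre : cls G a0 b0 = cls G p p' := rebase hc hm hab0 hpmem
  rw [hre] at hq ⊢
  have hpp'1 : G.dist p p' = 1 := dadj hpp'
  have hself : G.dist p p' = G.dist p p + 1 := by rw [G.dist_self]; omega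
  rcases side_dich hc hm hpp' z1 with hz1s | hz1s
  swap
  · -- z1 on the p'-side : the edge (p, z1) crosses
    refine ⟨(p, z1), (mem_cls_iff hc hm hpp').mpr ⟨hadj, Or.inl ⟨hself, hz1s⟩⟩, Or.inr rfl⟩
  · -- z1 on the p-side
    obtain ⟨q0, hqq0, hqmem⟩ := adjTo_ex hc hq
    have hsides := ((mem_cls_iff hc hm hpp').mp hqmem).2
    rcases hsides with ⟨hq1, hq2⟩ | ⟨hq1, hq2⟩
    · -- q on the p-side, q0 on the p'-side
      have hcr : Cross G p p' q q0 := ⟨hpp', hqq0, hq1, hq2⟩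
      have hpq0 : G.dist p q0 = G.dist p q + 1 := (transfer hc hm hcr p).mp hself
      have hz1q0 : G.dist z1 q0 = G.dist z1 q + 1 := (transfer hc hm hcr z1).mp hz1s
      obtain ⟨μ, hμ1, hμ2, hμ3⟩ := lemK hc hm hpp' hadj hz1s hq2 (by omega)
      exact ⟨(z1, μ), (mem_cls_iff hc hm hpp').mpr ⟨hμ1, Or.inl ⟨hz1s, hμ3⟩⟩, Or.inl rfl⟩
    · -- q on the p'-side
      obtain ⟨μ, hμ1, hμ2, hμ3⟩ := lemK hc hm hpp' hadj hz1s hq1 hbtw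
      exact ⟨(z1, μ), (mem_cls_iff hc hm hpp').mpr ⟨hμ1, Or.inl ⟨hz1s, hμ3⟩⟩, Or.inl rfl⟩

/-- Convexity of hyperplane carriers. -/
lemma conv (hc : G.Connected) (hm : MedH G) {h : Set (V × V)} (hh : IsHyperplane G h) :
    ∀ n : ℕ, ∀ p z q : V, G.dist p z = n → AdjTo G h p → AdjTo G h q →
      G.dist p z + G.dist z q = G.dist p q → AdjTo G h z := by
  intro n
  induction n with
  | zero =>
    intro p z q h0 hp hq hbtw
    have : p = z := (d0 hc).mp h0
    rwa [← this]
  | succ n IH =>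
    intro p z q h0 hp hq hbtw
    obtain ⟨z1, hpz1, hz1z⟩ := step hc h0
    have t1 := tri hc z1 z q
    have t2 := tri hc p z1 q
    have dpz1 : G.dist p z1 = 1 := dadj hpz1
    have hb1 : 1 + G.dist z1 q = G.dist p q := by omega
    have hz1 : AdjTo G h z1 := conv_step hc hm hh hp hq hpz1 hb1
    exact IH z1 z q hz1z hz1 hq (by omega)

end MedAux

namespace MedAux
variable {G : SimpleGraph V}

/-- If `Y` lies in the "opposite quadrant" of the two walls at the corner `v`,
the two walls through `v` are transverse. -/
lemma transverseTL (hc : G.Connected) (hm : MedH G) {v x c Y : V}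
    (hvx : G.Adj v x) (hvc : G.Adj v c) (hne : x ≠ c)
    (hYx : G.dist Y x + 1 = G.dist Y v) (hYc : G.dist Y c + 1 = G.dist Y v) :
    Transverse G (cls G v x) (cls G v c) := by
  have hxc : G.dist x c = 2 := by
    apply dist2 hc hne
    · intro hadj; exact no_tri hc hm hvx hadj hvc
    · have t := tri hc x v c
      have : G.dist x v = 1 := by rw [dcomm]; exact dadj hvx
      have := dadj hvc
      omega
  have hxY : G.dist x Y = G.dist Y x := dcomm _ _
  have hcY : G.dist c Y = G.dist Y c := dcomm _ _
  obtain ⟨m, ⟨e1, e2, e3⟩, -⟩ := hm x c Y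
  rw [hxc] at e1
  have hne1 : G.dist x m ≠ 0 := by
    intro h0
    have : x = m := (d0 hc).mp h0
    rw [← this] at e3
    have : G.dist c x = 2 := by rw [dcomm]; exact hxc
    omega
  have hne2 : G.dist m c ≠ 0 := by
    intro h0
    have : m = c := (d0 hc).mp h0
    rw [this] at e2
    omega
  have hxm : G.dist x m = 1 := by omega
  have hmc : G.dist m c = 1 := by omega
  have hmY : 1 + G.dist m Y = G.dist x Y := by omega
  have hmv : G.dist m v = 2 := by
    have hvm : G.dist v m = 2 := by
      apply dist2 hc
      · intro he
        have hvY : G.dist v Y = G.dist Y v := dcomm _ _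
        rw [← he] at hmY
        omega
      · intro hadj; exact no_tri hc hm hvx (adj_of_d1 hxm) hadj
      · have t := tri hc v x m
        have := dadj hvx
        omega
    rw [dcomm]; exact hvm
  have hAdjxm : G.Adj x m := adj_of_d1 hxm
  have hAdjcm : G.Adj c m := (adj_of_d1 hmc).symm
  have dcv : G.dist c v = 1 := by rw [dcomm]; exact dadj hvc
  have dxv : G.dist x v = 1 := by rw [dcomm]; exact dadj hvx
  have dcx : G.dist c x = 2 := by rw [dcomm]; exact hxc
  have dmx : G.dist m x = 1 := by rw [dcomm]; exact hxm
  refine ⟨v, x, c, m, self_mem hvx, ?_, self_mem hvc, ?_, hvx, hAdjcm, hvc, hAdjxm⟩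
  · exact (mem_cls_iff hc hm hvx).mpr ⟨hAdjcm, Or.inl ⟨by omega, by omega⟩⟩
  · exact (mem_cls_iff hc hm hvc).mpr ⟨hAdjxm, Or.inl ⟨by omega, by omega⟩⟩

end MedAux

namespace MedAux
variable {G : SimpleGraph V}

lemma forward_aux (hc : G.Connected) (hm : MedH G) (hnoext : NoHypExtremalVertex G)
    {v w x : V} (hvw : G.Adj v w) (hxv : x ≠ v) (hxw : x ≠ w)
    (hside : G.dist x w = G.dist x v + 1)
    (hsub : Wv G v ∩ Wv G w ⊆ Wv G x) : False := by
  have dvw : G.dist v w = 1 := dadj hvw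
  -- replace x by a neighbour X of v on a geodesic from v to x
  obtain ⟨k', hk'⟩ : ∃ k', G.dist x v = k' + 1 := by
    have : G.dist x v ≠ 0 := fun h => hxv ((d0 hc).mp h)
    exact ⟨G.dist x v - 1, by omega⟩
  obtain ⟨X, hvX, hXx⟩ := step hc (show G.dist v x = k' + 1 by rw [dcomm]; exact hk')
  have hXv : G.dist X v = 1 := by rw [dcomm]; exact dadj hvX
  -- every hyperplane adjacent to v and w is adjacent to X
  have hsubX : ∀ h ∈ Wv G v ∩ Wv G w, AdjTo G h X := by
    rintro h ⟨⟨hyp, hav⟩, hyp2, haw⟩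
    have hax : AdjTo G h x := (hsub ⟨⟨hyp, hav⟩, hyp2, haw⟩).2
    refine conv hc hm hyp 1 v X x (dadj hvX) hav hax ?_
    have h1 := dadj hvX
    have h2 : G.dist v x = k' + 1 := by rw [dcomm]; exact hk'
    omega
  have hXw : X ≠ w := by
    intro he
    rw [he] at hXx
    have : G.dist x w = G.dist w x := dcomm _ _
    omega
  have hXwd : G.dist X w = 2 := by
    rcases side_dich hc hm hvw X with h | h
    · omega
    · exfalso; apply hXw; exact (d0 hc).mp (by omega)
  -- the hyperplane of the edge (v,w)
  have hhat : cls G v w ∈ Wv G v ∩ Wv G w :=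
    ⟨⟨cls_hyp hvw, ⟨(v, w), self_mem hvw, Or.inl rfl⟩⟩,
     ⟨cls_hyp hvw, ⟨(v, w), self_mem hvw, Or.inr rfl⟩⟩⟩
  obtain ⟨x', hXx', hmemhat⟩ := adjTo_ex hc (hsubX _ hhat)
  have hsides := ((mem_cls_iff hc hm hvw).mp hmemhat).2
  have hx'w : G.dist x' v = G.dist x' w + 1 := by
    rcases hsides with ⟨h1, h2⟩ | ⟨h1, h2⟩
    · exact h2
    · exfalso; omega
  have hx'v : G.dist x' v = 2 := by
    apply dist2 hc
    · intro he
      rw [he, G.dist_self] at hx'w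
      omega
    · intro hadj; exact no_tri hc hm hvX hXx' hadj.symm
    · have t := tri hc x' X v
      have : G.dist x' X = 1 := by rw [dcomm]; exact dadj hXx'
      omega
  have hx'w1 : G.dist x' w = 1 := by omega
  have hwx' : G.Adj w x' := (adj_of_d1 hx'w1).symm
  have hwX : G.dist w X = 2 := by rw [dcomm X w] at hXwd; exact hXwd
  have hwv : G.dist w v = 1 := by rw [dcomm]; exact dvw
  have hx'X : G.dist x' X = 1 := by rw [dcomm]; exact dadj hXx'
  have hmemu : (w, x') ∈ cls G v X :=
    (mem_cls_iff hc hm hvX).mpr ⟨hwx', Or.inl ⟨by omega, by omega⟩⟩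
  have hune : cls G v X ≠ cls G v w := by
    intro he
    have h1 := self_mem hvX
    rw [he] at h1
    have h2 := ((mem_cls_iff hc hm hvw).mp h1).2
    have h3 : G.dist v v = 0 := SimpleGraph.dist_self
    omega
  apply hnoext (cls G v w) (cls_hyp hvw) (v, w) (self_mem hvw)
  refine ⟨cls G v X, cls_hyp hvX, hune, ⟨X, x', self_mem hvX, hmemu, hXx'⟩, ?_⟩
  rintro u' hyp' hne' ⟨cc, dd, hvc, hwd, hcd⟩ hneu
  obtain ⟨a0, b0, hab0, rfl⟩ := hyp_ex hyp'
  have hvcadj : G.Adj v cc := hvc.1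
  have hre : cls G a0 b0 = cls G v cc := rebase hc hm hab0 hvc
  rw [hre] at hwd hneu ⊢
  have hccX : cc ≠ X := by
    intro he; rw [he] at hneu; exact hneu rfl
  have hu'mem : cls G v cc ∈ Wv G v ∩ Wv G w :=
    ⟨⟨cls_hyp hvcadj, ⟨(v, cc), self_mem hvcadj, Or.inl rfl⟩⟩,
     ⟨cls_hyp hvcadj, ⟨(w, dd), hwd, Or.inl rfl⟩⟩⟩
  obtain ⟨p, hXp, hXpmem⟩ := adjTo_ex hc (hsubX _ hu'mem)
  have dvc : G.dist v cc = 1 := dadj hvcadj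
  have hXc : G.dist X cc = 2 := by
    rcases side_dich hc hm hvcadj X with h | h
    · omega
    · exfalso; exact hccX ((d0 hc).mp (by omega)).symm
  have hsp := ((mem_cls_iff hc hm hvcadj).mp hXpmem).2
  have hp1 : G.dist p v = G.dist p cc + 1 := by
    rcases hsp with ⟨h1, h2⟩ | ⟨h1, h2⟩
    · exact h2
    · exfalso; omega
  have dXp : G.dist X p = 1 := dadj hXp
  have dpX : G.dist p X = 1 := by rw [dcomm]; exact dXp
  rcases side_dich hc hm hvX p with hbad | hgood
  · -- p on the v-side of (v,X): then (X,p) lies in both classes, contradiction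
    exfalso
    have hXX : G.dist X X = 0 := SimpleGraph.dist_self
    have hmem2 : (X, p) ∈ cls G v X :=
      (mem_cls_iff hc hm hvX).mpr ⟨hXp, Or.inr ⟨by omega, by omega⟩⟩
    exact hneu (cls_eq_of_mem hc hm hvcadj hvX hXpmem hmem2)
  · exact transverseTL hc hm hvX hvcadj hccX.symm hgood.symm hp1.symm

end MedAux


/-- if no hyperplane of `X` has an extremal vertex, then two distinct
vertices `v, w` are adjacent iff there is no vertex `x ∉ {v, w}` with
`Wv G v ∩ Wv G w ⊆ Wv G v ∩ Wv G x`. -/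
theorem adjacency_from_Wv (G : SimpleGraph V) (hG : IsMedianGraph G)
    (hnoext : NoHypExtremalVertex G) (v w : V) (hvw : v ≠ w) :
    G.Adj v w ↔ ¬ ∃ x : V, x ≠ v ∧ x ≠ w ∧ Wv G v ∩ Wv G w ⊆ Wv G v ∩ Wv G x := by
  obtain ⟨hc, hm⟩ := hG
  constructor
  · rintro hadj ⟨x, hxv, hxw, hsub⟩
    have hsub' : Wv G v ∩ Wv G w ⊆ Wv G x := fun h hh => (hsub hh).2
    rcases MedAux.side_dich hc hm hadj x with hs | hs
    · exact MedAux.forward_aux hc hm hnoext hadj hxv hxw hs hsub'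
    · exact MedAux.forward_aux hc hm hnoext hadj.symm hxw hxv hs
        (fun h hh => hsub' ⟨hh.2, hh.1⟩)
  · intro hno
    by_contra hnadj
    apply hno
    have h0 : G.dist v w ≠ 0 := fun h => hvw ((MedAux.d0 hc).mp h)
    have h1 : G.dist v w ≠ 1 := fun h => hnadj (MedAux.adj_of_d1 h)
    obtain ⟨x, hvx, hxw⟩ :=
      MedAux.step hc (show G.dist v w = (G.dist v w - 2 + 1) + 1 by omega)
    refine ⟨x, hvx.ne', ?_, ?_⟩
    · intro he
      rw [he, G.dist_self] at hxw
      omega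
    · rintro h ⟨⟨hyp, hav⟩, hyp2, haw⟩
      refine ⟨⟨hyp, hav⟩, hyp, ?_⟩
      refine MedAux.conv hc hm hyp 1 v x w (MedAux.dadj hvx) hav haw ?_
      have := MedAux.dadj hvx
      omega
end

section
/- Let X be a finite-dimensional CAT(0) cube complex, w a hyperplane, and u a hyperplane with u ∉ I(w) but u in contact with w. Then either u is not transverse to w, or there exists a hyperplane t transverse to w such that u is not transverse to t. -/
open SimpleGraph

variable {V : Type*}

namespace MedianAux

variable {V : Type*} {G : SimpleGraph V}

lemma adj_dist_one (h : G.Adj x y) : G.dist x y = 1 :=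
  SimpleGraph.dist_eq_one_iff_adj.mpr h

lemma dist_zero_iff (hc : G.Connected) {x y : V} : G.dist x y = 0 ↔ x = y :=
  hc.dist_eq_zero_iff

lemma tri (hc : G.Connected) (x y z : V) : G.dist x z ≤ G.dist x y + G.dist y z :=
  hc.dist_triangle

/-- In a median graph, for an edge `x~y` every vertex is strictly closer to one end. -/
lemma dichot (hG : IsMedianGraph G) {x y : V} (hxy : G.Adj x y) (z : V) :
    G.dist z y = G.dist z x + 1 ∨ G.dist z x = G.dist z y + 1 := by
  obtain ⟨m, ⟨h1, h2, h3⟩, -⟩ := hG.2 x y z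
  rw [adj_dist_one hxy] at h1
  have hcase : G.dist x m = 0 ∨ G.dist m y = 0 := by omega
  rcases hcase with h | h
  · have : x = m := (dist_zero_iff hG.1).mp h
    subst this
    left
    have := SimpleGraph.dist_comm (G := G) (u := z) (v := y)
    have := SimpleGraph.dist_comm (G := G) (u := z) (v := x)
    have hyx : G.dist y x = 1 := by rw [SimpleGraph.dist_comm]; exact adj_dist_one hxy
    omega
  · have hmy : m = y := (dist_zero_iff hG.1).mp h
    rw [hmy] at h2
    right
    have := SimpleGraph.dist_comm (G := G) (u := z) (v := y)
    have := SimpleGraph.dist_comm (G := G) (u := z) (v := x)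
    have hxy1 : G.dist x y = 1 := adj_dist_one hxy
    omega

lemma exists_next (hc : G.Connected) {z μ : V} {k : ℕ} (h : G.dist z μ = k + 1) :
    ∃ z', G.Adj z z' ∧ G.dist z' μ = k := by
  obtain ⟨p, hp⟩ := hc.exists_walk_length_eq_dist z μ
  rw [h] at hp
  cases p with
  | nil => simp at hp
  | @cons _ b _ hadj q =>
    refine ⟨b, hadj, ?_⟩
    have h1 : G.dist b μ ≤ k := by
      have := SimpleGraph.dist_le q
      simp [SimpleGraph.Walk.length_cons] at hp
      omega
    have h2 : G.dist z μ ≤ G.dist z b + G.dist b μ := tri hc _ _ _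
    have h3 : G.dist z b = 1 := adj_dist_one hadj
    omega

/-- Quadrangle condition. -/
lemma quad (hG : IsMedianGraph G) {x p q r : V} (hrp : G.Adj r p) (hrq : G.Adj r q)
    (hne : p ≠ q) (hp : G.dist x p + 1 = G.dist x r) (hq : G.dist x q + 1 = G.dist x r) :
    ∃ s, G.Adj p s ∧ G.Adj q s ∧ G.dist x s + 2 = G.dist x r := by
  have hc := hG.1
  have hpq2 : G.dist p q = 2 := by
    have hle : G.dist p q ≤ 2 := by
      have := tri hc p r q
      have h1 : G.dist p r = 1 := by rw [SimpleGraph.dist_comm]; exact adj_dist_one hrp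
      have h2 : G.dist r q = 1 := adj_dist_one hrq
      omega
    have hne0 : G.dist p q ≠ 0 := fun h0 => hne ((dist_zero_iff hc).mp h0)
    have hne1 : G.dist p q ≠ 1 := by
      intro h1
      have hadj : G.Adj p q := SimpleGraph.dist_eq_one_iff_adj.mp h1
      rcases dichot hG hadj x with h | h <;> omega
    omega
  obtain ⟨m, ⟨e1, e2, e3⟩, -⟩ := hG.2 p q x
  rw [hpq2] at e1
  have c1 := SimpleGraph.dist_comm (G := G) (u := x) (v := p)
  have c2 := SimpleGraph.dist_comm (G := G) (u := x) (v := q)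
  have c3 := SimpleGraph.dist_comm (G := G) (u := m) (v := x)
  have c4 := SimpleGraph.dist_comm (G := G) (u := p) (v := m)
  have c5 := SimpleGraph.dist_comm (G := G) (u := q) (v := m)
  have hpm : G.dist p m = 1 := by omega
  have hqm : G.dist q m = 1 := by omega
  refine ⟨m, SimpleGraph.dist_eq_one_iff_adj.mp hpm, SimpleGraph.dist_eq_one_iff_adj.mp hqm, ?_⟩
  omega

lemma chain_le (hc : G.Connected) (t : ℕ → V) (k : ℕ)
    (ha : ∀ i < k, G.Adj (t i) (t (i + 1))) :
    ∀ n i, i + n ≤ k → G.dist (t i) (t (i + n)) ≤ n := by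
  intro n
  induction n with
  | zero => intro i _; simp [(dist_zero_iff hc).mpr rfl]
  | succ n ih =>
    intro i hik
    have h1 := ih i (by omega)
    have h2 : G.Adj (t (i + n)) (t (i + n + 1)) := ha _ (by omega)
    have h3 := tri hc (t i) (t (i + n)) (t (i + n + 1))
    have h4 : G.dist (t (i + n)) (t (i + n + 1)) = 1 := adj_dist_one h2
    have : i + (n + 1) = i + n + 1 := by omega
    rw [this]
    omega

lemma geo_dist (hc : G.Connected) (t : ℕ → V) (k : ℕ)
    (ha : ∀ i < k, G.Adj (t i) (t (i + 1))) (hg : G.dist (t 0) (t k) = k) :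
    ∀ i j, i ≤ j → j ≤ k → G.dist (t i) (t j) = j - i := by
  intro i j hij hjk
  have h1 : G.dist (t 0) (t i) ≤ i := by
    have := chain_le hc t k ha i 0 (by omega); simpa using this
  have h2 : G.dist (t i) (t j) ≤ j - i := by
    have := chain_le hc t k ha (j - i) i (by omega)
    have hji : i + (j - i) = j := by omega
    rwa [hji] at this
  have h3 : G.dist (t j) (t k) ≤ k - j := by
    have := chain_le hc t k ha (k - j) j (by omega)
    have hjk' : j + (k - j) = k := by omega
    rwa [hjk'] at this
  have h4 := tri hc (t 0) (t i) (t k)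
  have h5 := tri hc (t i) (t j) (t k)
  omega

end MedianAux

namespace MedianAux

variable {V : Type*} {G : SimpleGraph V}

lemma side_not_both {z x y : V} (h1 : G.dist z y = G.dist z x + 1)
    (h2 : G.dist z x = G.dist z y + 1) : False := by omega

/-- Crossing an edge of the cut: distance relations. -/
lemma cross_dist (hG : IsMedianGraph G) {x y : V} (hxy : G.Adj x y) {a b : V}
    (hab : G.Adj a b) (ha : G.dist a y = G.dist a x + 1) (hb : G.dist b x = G.dist b y + 1) :
    G.dist b x = G.dist a x + 1 ∧ G.dist a y = G.dist b y + 1 := by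
  have d1 := dichot hG hab x
  have d2 := dichot hG hab y
  have c1 := SimpleGraph.dist_comm (G := G) (u := x) (v := a)
  have c2 := SimpleGraph.dist_comm (G := G) (u := x) (v := b)
  have c3 := SimpleGraph.dist_comm (G := G) (u := y) (v := a)
  have c4 := SimpleGraph.dist_comm (G := G) (u := y) (v := b)
  rcases d1 with h | h <;> rcases d2 with h' | h' <;> omega

lemma theta_char (hG : IsMedianGraph G) {x y p q : V} (hxy : G.Adj x y) :
    Theta G (x, y) (p, q) ↔
      ¬((G.dist p y = G.dist p x + 1) ↔ (G.dist q y = G.dist q x + 1)) := by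
  have d1 := dichot hG hxy p
  have d2 := dichot hG hxy q
  have c1 := SimpleGraph.dist_comm (G := G) (u := x) (v := p)
  have c2 := SimpleGraph.dist_comm (G := G) (u := x) (v := q)
  have c3 := SimpleGraph.dist_comm (G := G) (u := y) (v := p)
  have c4 := SimpleGraph.dist_comm (G := G) (u := y) (v := q)
  unfold Theta
  simp only [ne_eq]
  constructor
  · intro hθ hiff
    rcases d1 with h | h
    · have := hiff.mp h
      omega
    · rcases d2 with h' | h'
      · have := hiff.mpr h'
        omega
      · omega
  · intro h heq
    apply h
    constructor
    · intro hp'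
      rcases d2 with h' | h'
      · exact h'
      · omega
    · intro hq'
      rcases d1 with h' | h'
      · exact h'
      · omega

lemma theta_swap {e : V × V} {p q : V} : Theta G e (p, q) ↔ Theta G e (q, p) := by
  unfold Theta
  dsimp only
  constructor <;> intro h h' <;> omega

/-- Base case: no 2-path W⁺, W⁻, W⁺. -/
lemma base2 (hG : IsMedianGraph G) {x y p q s : V} (hxy : G.Adj x y)
    (hpq : G.Adj p q) (hqs : G.Adj q s) (hps : G.dist p s = 2)
    (hp : G.dist p y = G.dist p x + 1) (hs : G.dist s y = G.dist s x + 1)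
    (hq : G.dist q x = G.dist q y + 1) : False := by
  have hc := hG.1
  obtain ⟨hq1, hq2⟩ := cross_dist hG hxy hpq hp hq
  obtain ⟨hs1, hs2⟩ := cross_dist hG hxy hqs.symm hs hq
  -- now: d q x = d p x + 1, d p y = d q y + 1, d q x = d s x + 1, d s y = d q y + 1
  obtain ⟨m, ⟨e1, e2, e3⟩, -⟩ := hG.2 p s x
  rw [hps] at e1
  have c1 := SimpleGraph.dist_comm (G := G) (u := p) (v := m)
  have c2 := SimpleGraph.dist_comm (G := G) (u := s) (v := m)
  have c3 := SimpleGraph.dist_comm (G := G) (u := m) (v := x)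
  have hpm : G.dist p m = 1 := by omega
  have hms : G.dist m s = 1 := by omega
  have hmx : G.dist m x + 1 = G.dist p x := by omega
  have hmy : G.dist m y = G.dist p x := by
    have t1 := tri hc m x y
    have t2 := tri hc p m y
    have hxy1 : G.dist x y = 1 := adj_dist_one hxy
    omega
  obtain ⟨m', ⟨f1, f2, f3⟩, huniq⟩ := hG.2 p s y
  have g1 : G.dist p q = 1 := adj_dist_one hpq
  have g2 : G.dist q s = 1 := adj_dist_one hqs
  have c6 := SimpleGraph.dist_comm (G := G) (u := s) (v := q)
  have hqm' : q = m' := by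
    apply huniq
    refine ⟨by omega, by omega, by omega⟩
  have hmm' : m = m' := by
    apply huniq
    refine ⟨by omega, by omega, by omega⟩
  have : G.dist q x = G.dist m x := by rw [hqm', ← hmm']
  omega

/-- Halfspaces are convex (geodesics between same-side vertices stay on that side). -/
lemma convex_side (hG : IsMedianGraph G) {x y : V} (hxy : G.Adj x y) :
    ∀ Φ k (t : ℕ → V), (∑ i ∈ Finset.range (k + 1), (G.dist (t i) x + 1)) = Φ →
    (∀ i < k, G.Adj (t i) (t (i + 1))) → G.dist (t 0) (t k) = k →
    G.dist (t 0) y = G.dist (t 0) x + 1 → G.dist (t k) y = G.dist (t k) x + 1 →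
    ∀ j, j ≤ k → G.dist (t j) y = G.dist (t j) x + 1 := by
  have hc := hG.1
  intro Φ
  induction Φ using Nat.strong_induction_on with
  | _ Φ IH =>
  intro k t hΦ hadj hgeo h0 hk j hj
  by_contra hbad
  have hj0 : j ≠ 0 := by rintro rfl; exact hbad h0
  have hjk : j ≠ k := by rintro rfl; exact hbad hk
  have hk2 : 2 ≤ k := by omega
  by_cases hsplit : ∃ i, 0 < i ∧ i < k ∧ G.dist (t i) y = G.dist (t i) x + 1
  · obtain ⟨i, hi0, hik, hiS⟩ := hsplit
    have hij : i ≠ j := by rintro rfl; exact hbad hiS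
    rcases Nat.lt_or_ge j i with hlt | hge
    · -- use the initial segment [0, i]
      have hΦ' : (∑ m ∈ Finset.range (i + 1), (G.dist (t m) x + 1)) < Φ := by
        rw [← hΦ]
        refine Finset.sum_lt_sum_of_subset (i := k)
          (Finset.range_subset_range.mpr (by omega)) ?_ ?_ ?_ ?_
        · simp
        · simp; omega
        · omega
        · intro j _ _; omega
      exact hbad (IH _ hΦ' i t rfl (fun m hm => hadj m (by omega))
        (geo_dist hc t k hadj hgeo 0 i (by omega) (by omega)) h0 hiS j (by omega))
    · -- use the final segment [i, k]
      have hΦ' : (∑ m ∈ Finset.range (k - i + 1), (G.dist (t (i + m)) x + 1)) < Φ := by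
      -- reindex
        have hre : (∑ m ∈ Finset.range (k - i + 1), (G.dist (t (i + m)) x + 1)) =
            ∑ m ∈ Finset.Ico i (k + 1), (G.dist (t m) x + 1) := by
          rw [Finset.sum_Ico_eq_sum_range]
          have : k + 1 - i = k - i + 1 := by omega
          rw [this]
        rw [hre, ← hΦ]
        refine Finset.sum_lt_sum_of_subset (i := 0) ?_ ?_ ?_ ?_ ?_
        · intro m hm
          simp only [Finset.mem_Ico] at hm
          simp only [Finset.mem_range]
          omega
        · simp
        · simp; omega
        · omega
        · intro j _ _; omega
      have hstep : ∀ m < k - i, G.Adj (t (i + m)) (t (i + (m + 1))) := by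
        intro m hm
        have : i + (m + 1) = (i + m) + 1 := by omega
        rw [this]
        exact hadj (i + m) (by omega)
      have hgeo' : G.dist (t (i + 0)) (t (i + (k - i))) = k - i := by
        have h1 : i + (k - i) = k := by omega
        rw [h1]
        simp only [Nat.add_zero]
        exact geo_dist hc t k hadj hgeo i k (by omega) (by omega)
      have hconc := IH _ hΦ' (k - i) (fun m => t (i + m)) rfl hstep
        (by simpa using hgeo')
        (by simpa using hiS)
        (by
          have h1 : i + (k - i) = k := by omega
          simpa [h1] using hk)
        (j - i) (by omega)
      have h2 : i + (j - i) = j := by omega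
      exact hbad (by rw [← h2]; exact hconc)
  · push_neg at hsplit
    have hall : ∀ i, 0 < i → i < k → G.dist (t i) x = G.dist (t i) y + 1 := by
      intro i h1 h2
      rcases dichot hG hxy (t i) with h | h
      · have c1 := SimpleGraph.dist_comm (G := G) (u := x) (v := t i)
        have c2 := SimpleGraph.dist_comm (G := G) (u := y) (v := t i)
        exact absurd (by omega) (hsplit i h1 h2)
      · have c1 := SimpleGraph.dist_comm (G := G) (u := x) (v := t i)
        have c2 := SimpleGraph.dist_comm (G := G) (u := y) (v := t i)
        omega
    rcases Nat.eq_or_lt_of_le hk2 with hk2' | hk3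
    · -- k = 2 : the base case
      have h2 : k = 2 := hk2'.symm
      subst h2
      exact base2 hG hxy (hadj 0 (by omega)) (hadj 1 (by omega))
        (by simpa using hgeo) h0 hk (hall 1 (by omega) (by omega))
    · -- k ≥ 3 : straighten at an interior local max
      obtain ⟨i, hi_mem, hi_max⟩ := Finset.exists_max_image (Finset.Icc 1 (k - 1))
        (fun i => G.dist (t i) x) ⟨1, by simp; omega⟩
      simp only [Finset.mem_Icc] at hi_mem
      have hi0 : 0 < i := by omega
      have hik : i < k := by omega
      have hl : G.dist (t (i - 1)) x + 1 = G.dist (t i) x := by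
        have hadj' : G.Adj (t (i - 1)) (t i) := by
          have := hadj (i - 1) (by omega)
          have h1 : i - 1 + 1 = i := by omega
          rwa [h1] at this
        rcases Nat.eq_or_lt_of_le hi0 with h1 | h1
        · -- i = 1, left neighbour is t 0 which is on the x-side
          have hi1 : i = 1 := by omega
          subst hi1
          have h2 : G.dist (t 1) x = G.dist (t 0) x + 1 :=
            (cross_dist hG hxy hadj' h0 (hall 1 (by omega) (by omega))).1
          show G.dist (t 0) x + 1 = G.dist (t 1) x
          omega
        · -- left neighbour is interior
          have hmax := hi_max (i - 1) (by simp only [Finset.mem_Icc]; omega)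
          rcases dichot hG hadj' x with h | h <;>
          · have c1 := SimpleGraph.dist_comm (G := G) (u := x) (v := t (i - 1))
            have c2 := SimpleGraph.dist_comm (G := G) (u := x) (v := t i)
            omega
      have hr : G.dist (t (i + 1)) x + 1 = G.dist (t i) x := by
        have hadj' : G.Adj (t i) (t (i + 1)) := hadj i hik
        rcases Nat.eq_or_lt_of_le (show i + 1 ≤ k by omega) with h1 | h1
        · -- i + 1 = k
          rw [h1] at hadj' ⊢
          have h2 := (cross_dist hG hxy hadj'.symm hk (hall i (by omega) (by omega))).1
          omega
        · have hmax := hi_max (i + 1) (by simp only [Finset.mem_Icc]; omega)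
          rcases dichot hG hadj' x with h | h <;>
          · have c1 := SimpleGraph.dist_comm (G := G) (u := x) (v := t (i + 1))
            have c2 := SimpleGraph.dist_comm (G := G) (u := x) (v := t i)
            omega
      have hadjl : G.Adj (t (i - 1)) (t i) := by
        have h1 := hadj (i - 1) (by omega)
        rwa [show i - 1 + 1 = i from by omega] at h1
      have hadjr : G.Adj (t i) (t (i + 1)) := hadj i hik
      have hne2 : t (i - 1) ≠ t (i + 1) := by
        intro hEq
        have hd : G.dist (t (i - 1)) (t (i + 1)) = (i + 1) - (i - 1) :=
          geo_dist hc t k hadj hgeo (i - 1) (i + 1) (by omega) (by omega)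
        rw [hEq, (dist_zero_iff hc).mpr rfl] at hd
        omega
      have cxl := SimpleGraph.dist_comm (G := G) (u := t (i - 1)) (v := x)
      have cxi := SimpleGraph.dist_comm (G := G) (u := t i) (v := x)
      have cxr := SimpleGraph.dist_comm (G := G) (u := t (i + 1)) (v := x)
      obtain ⟨s, hs1, hs2, hs3⟩ := quad hG (x := x) hadjl.symm hadjr hne2 (by omega) (by omega)
      set t' : ℕ → V := fun m => if m = i then s else t m with ht'
      have ht'i : t' i = s := by simp [ht']
      have ht'ne : ∀ m, m ≠ i → t' m = t m := by
        intro m hm; simp [ht', hm]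
      have hadj' : ∀ m < k, G.Adj (t' m) (t' (m + 1)) := by
        intro m hm
        by_cases h1 : m = i
        · subst h1
          rw [ht'i, ht'ne (m + 1) (by omega)]
          exact hs2.symm
        · by_cases h2 : m + 1 = i
          · rw [ht'ne m h1, h2, ht'i]
            have : m = i - 1 := by omega
            subst this
            exact hs1
          · rw [ht'ne m h1, ht'ne (m + 1) h2]
            exact hadj m hm
      have ht'0 : t' 0 = t 0 := ht'ne 0 (by omega)
      have ht'k : t' k = t k := ht'ne k (by omega)
      have hsum : (∑ m ∈ Finset.range (k + 1), (G.dist (t' m) x + 1)) + 2 = Φ := by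
        rw [← hΦ]
        have hmem : i ∈ Finset.range (k + 1) := by simp; omega
        rw [← Finset.add_sum_erase _ _ hmem,
          ← Finset.add_sum_erase _ (fun m => G.dist (t m) x + 1) hmem]
        have hcong : (∑ m ∈ (Finset.range (k + 1)).erase i, (G.dist (t' m) x + 1)) =
            ∑ m ∈ (Finset.range (k + 1)).erase i, (G.dist (t m) x + 1) :=
          Finset.sum_congr rfl (fun m hm => by
            rw [ht'ne m (Finset.mem_erase.mp hm).1])
        rw [hcong, ht'i]
        have csx := SimpleGraph.dist_comm (G := G) (u := s) (v := x)
        omega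
      have hallS := IH _ (by omega) k t' rfl hadj'
        (by rw [ht'0, ht'k]; exact hgeo)
        (by rw [ht'0]; exact h0)
        (by rw [ht'k]; exact hk)
      by_cases hi1 : i = 1
      · have hS := hallS 2 (by omega)
        rw [ht'ne 2 (by omega)] at hS
        exact side_not_both hS (hall 2 (by omega) (by omega))
      · have hS := hallS 1 (by omega)
        rw [ht'ne 1 (by omega)] at hS
        exact side_not_both hS (hall 1 (by omega) (by omega))

end MedianAux

namespace MedianAux

variable {V : Type*} {G : SimpleGraph V}

/-- Convexity of halfspaces, three-point form. -/
lemma between (hG : IsMedianGraph G) {x y z1 z2 μ : V} (hxy : G.Adj x y)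
    (h1 : G.dist z1 y = G.dist z1 x + 1) (h2 : G.dist z2 y = G.dist z2 x + 1)
    (hb : G.dist z1 μ + G.dist μ z2 = G.dist z1 z2) :
    G.dist μ y = G.dist μ x + 1 := by
  have hc := hG.1
  obtain ⟨w1, hw1⟩ := hc.exists_walk_length_eq_dist z1 μ
  obtain ⟨w2, hw2⟩ := hc.exists_walk_length_eq_dist μ z2
  set l1 := G.dist z1 μ with hl1
  set l2 := G.dist μ z2 with hl2
  set k := l1 + l2 with hk
  set t : ℕ → V := fun i => if i ≤ l1 then w1.getVert i else w2.getVert (i - l1) with ht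
  have ht0 : t 0 = z1 := by
    simp only [ht, if_pos (Nat.zero_le l1)]
    exact w1.getVert_zero
  have htl1 : t l1 = μ := by
    simp only [ht, if_pos (le_refl l1)]
    rw [← hw1]
    exact w1.getVert_length
  have htk : t k = z2 := by
    rcases Nat.eq_zero_or_pos l2 with h0 | hpos
    · have hμz : μ = z2 := (dist_zero_iff hc).mp (by omega)
      have hkl : k = l1 := by omega
      rw [hkl, htl1, hμz]
    · have hnk : ¬ (k ≤ l1) := by omega
      simp only [ht, if_neg hnk]
      have : k - l1 = l2 := by omega
      rw [this, ← hw2]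
      exact w2.getVert_length
  have hadjt : ∀ i < k, G.Adj (t i) (t (i + 1)) := by
    intro i hik
    by_cases hA : i + 1 ≤ l1
    · simp only [ht, if_pos hA, if_pos (show i ≤ l1 by omega)]
      exact w1.adj_getVert_succ (by omega)
    · by_cases hB : i ≤ l1
      · have hil : i = l1 := by omega
        have hl2pos : 0 < l2 := by omega
        have hadj0 : G.Adj (w2.getVert 0) (w2.getVert 1) :=
          w2.adj_getVert_succ (by omega)
        rw [w2.getVert_zero] at hadj0
        simp only [ht, if_pos hB, if_neg hA]
        have e1 : w1.getVert i = μ := by rw [hil, ← hw1]; exact w1.getVert_length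
        have e2 : i + 1 - l1 = 1 := by omega
        rw [e1, e2]
        exact hadj0
      · simp only [ht, if_neg hB, if_neg hA]
        have e2 : i + 1 - l1 = (i - l1) + 1 := by omega
        rw [e2]
        exact w2.adj_getVert_succ (by omega)
  have hgeo : G.dist (t 0) (t k) = k := by rw [ht0, htk]; omega
  have hres := convex_side hG hxy _ k t rfl hadjt hgeo
    (by rw [ht0]; exact h1) (by rw [htk]; exact h2) l1 (by omega)
  rwa [htl1] at hres

lemma between' (hG : IsMedianGraph G) {x y z1 z2 μ : V} (hxy : G.Adj x y)
    (h1 : G.dist z1 x = G.dist z1 y + 1) (h2 : G.dist z2 x = G.dist z2 y + 1)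
    (hb : G.dist z1 μ + G.dist μ z2 = G.dist z1 z2) :
    G.dist μ x = G.dist μ y + 1 :=
  between hG hxy.symm h1 h2 hb

end MedianAux

namespace MedianAux

variable {V : Type*} {G : SimpleGraph V}

lemma not_side (hG : IsMedianGraph G) {x y : V} (hxy : G.Adj x y) {z : V}
    (h : ¬ (G.dist z y = G.dist z x + 1)) : G.dist z x = G.dist z y + 1 :=
  (dichot hG hxy z).resolve_left h

lemma side_niff (hG : IsMedianGraph G) {x y : V} (hxy : G.Adj x y) {a b : V}
    (h : ¬(G.dist a x = G.dist a y + 1 ↔ G.dist b x = G.dist b y + 1)) :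
    ¬(G.dist a y = G.dist a x + 1 ↔ G.dist b y = G.dist b x + 1) := by
  intro hiff
  apply h
  constructor
  · intro ha
    rcases dichot hG hxy b with hb | hb
    · exact absurd (hiff.mpr hb) (by omega)
    · exact hb
  · intro hb
    rcases dichot hG hxy a with ha | ha
    · exact absurd (hiff.mp ha) (by omega)
    · exact ha

/-- Carrier convexity, oriented core version. -/
lemma car_convex₀ (hG : IsMedianGraph G) {x y : V} (hxy : G.Adj x y) :
    ∀ k (z1 z2 μ z1' z2' : V), G.dist z1 μ = k →
    G.Adj z1 z1' → G.Adj z2 z2' →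
    G.dist z1 y = G.dist z1 x + 1 → G.dist z2 y = G.dist z2 x + 1 →
    G.dist z1' x = G.dist z1' y + 1 → G.dist z2' x = G.dist z2' y + 1 →
    G.dist z1 μ + G.dist μ z2 = G.dist z1 z2 →
    ∃ μ', G.Adj μ μ' ∧ G.dist μ y = G.dist μ x + 1 ∧ G.dist μ' x = G.dist μ' y + 1 := by
  have hc := hG.1
  intro k
  induction k with
  | zero =>
    intro z1 z2 μ z1' z2' hk h1 h2 hs1 hs2 hs1' hs2' hb
    have : z1 = μ := (dist_zero_iff hc).mp hk
    subst this
    exact ⟨z1', h1, hs1, hs1'⟩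
  | succ k ih =>
    intro z1 z2 μ z1' z2' hk h1 h2 hs1 hs2 hs1' hs2' hb
    have hSμ : G.dist μ y = G.dist μ x + 1 := between hG hxy hs1 hs2 hb
    rw [hk] at hb
    obtain ⟨p1, hp1adj, hp1μ⟩ := exists_next hc hk
    have hd1 : G.dist z1 p1 = 1 := adj_dist_one hp1adj
    have hp1z2 : G.dist p1 z2 + 1 = G.dist z1 z2 := by
      have t1 := tri hc z1 p1 z2
      have t2 := tri hc p1 μ z2
      omega
    have hp1b : G.dist p1 μ + G.dist μ z2 = G.dist p1 z2 := by omega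
    have hSp1 : G.dist p1 y = G.dist p1 x + 1 :=
      between hG hxy hs1 hs2 (by omega)
    have hdz2 : G.dist z2 z2' = 1 := adj_dist_one h2
    have cz2 := SimpleGraph.dist_comm (G := G) (u := z2') (v := z2)
    have f1 : G.dist z1 z2' = G.dist z1 z2 + 1 := by
      rcases dichot hG h2 z1 with h | h
      · exact h
      · exfalso
        have hbet : G.dist z1 z2' + G.dist z2' z2 = G.dist z1 z2 := by omega
        exact side_not_both (between hG hxy hs1 hs2 hbet) hs2'
    have f2 : G.dist p1 z2' = G.dist z1 z2 := by
      rcases dichot hG h2 p1 with h | h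
      · omega
      · exfalso
        have hbet : G.dist p1 z2' + G.dist z2' z2 = G.dist p1 z2 := by omega
        exact side_not_both (between hG hxy hSp1 hs2 hbet) hs2'
    have hdz1 : G.dist z1 z1' = 1 := adj_dist_one h1
    have cz1 := SimpleGraph.dist_comm (G := G) (u := z1') (v := z1)
    have f3 : G.dist z1' z2' = G.dist z1 z2 := by
      have cc := SimpleGraph.dist_comm (G := G) (u := z2') (v := z1')
      have cc2 := SimpleGraph.dist_comm (G := G) (u := z2') (v := z1)
      rcases dichot hG h1 z2' with h | h
      · exfalso
        have hbet : G.dist z1' z1 + G.dist z1 z2' = G.dist z1' z2' := by omega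
        exact side_not_both hs1 (between' hG hxy hs1' hs2' hbet)
      · omega
    have f4 : G.dist p1 z1' = 2 := by
      have hle := tri hc p1 z1 z1'
      have cp1 := SimpleGraph.dist_comm (G := G) (u := p1) (v := z1)
      have hne0 : G.dist p1 z1' ≠ 0 := by
        intro h0
        have : p1 = z1' := (dist_zero_iff hc).mp h0
        rw [this] at hSp1
        omega
      have hne1 : G.dist p1 z1' ≠ 1 := by
        intro h1'
        have hadj' : G.Adj p1 z1' := SimpleGraph.dist_eq_one_iff_adj.mp h1'
        rcases dichot hG hadj' z1 with h | h <;> omega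
      omega
    obtain ⟨m, ⟨e1, e2, e3⟩, -⟩ := hG.2 p1 z1' z2'
    rw [f4] at e1
    rw [f2] at e2
    rw [f3] at e3
    have cm1 := SimpleGraph.dist_comm (G := G) (u := z1') (v := m)
    have hKpos : 1 ≤ G.dist z1 z2 := by omega
    have hm1 : G.dist p1 m = 1 := by omega
    have hm2 : G.dist m z1' = 1 := by omega
    have hm3 : G.dist m z2' + 1 = G.dist z1 z2 := by omega
    have hSm : G.dist m x = G.dist m y + 1 := by
      apply between' hG hxy hs1' hs2'
      omega
    exact ih p1 z2 μ m z2' hp1μ (SimpleGraph.dist_eq_one_iff_adj.mp hm1) h2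
      hSp1 hs2 hSm hs2' hp1b

/-- Carrier convexity, `z1` on the positive side. -/
lemma car_convexS (hG : IsMedianGraph G) {x y : V} (hxy : G.Adj x y)
    {z1 z2 μ z1' z2' : V} (h1 : G.Adj z1 z1') (h2 : G.Adj z2 z2')
    (hs1 : G.dist z1 y = G.dist z1 x + 1) (hs1' : G.dist z1' x = G.dist z1' y + 1)
    (hside2 : ¬(G.dist z2 y = G.dist z2 x + 1 ↔ G.dist z2' y = G.dist z2' x + 1))
    (hb : G.dist z1 μ + G.dist μ z2 = G.dist z1 z2) :
    ∃ μ', G.Adj μ μ' ∧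
      ¬(G.dist μ y = G.dist μ x + 1 ↔ G.dist μ' y = G.dist μ' x + 1) := by
  have hc := hG.1
  by_cases hS2 : G.dist z2 y = G.dist z2 x + 1
  · have hs2' : G.dist z2' x = G.dist z2' y + 1 := by
      apply not_side hG hxy
      intro h
      exact hside2 ⟨fun _ => h, fun _ => hS2⟩
    obtain ⟨μ', hadj, hA, hB⟩ := car_convex₀ hG hxy _ z1 z2 μ z1' z2' rfl h1 h2
      hs1 hS2 hs1' hs2' hb
    exact ⟨μ', hadj, fun hiff => side_not_both (hiff.mp hA) hB⟩
  · have hs2 : G.dist z2 x = G.dist z2 y + 1 := not_side hG hxy hS2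
    have hS2' : G.dist z2' y = G.dist z2' x + 1 := by
      by_contra h
      exact hside2 ⟨fun hh => absurd hh hS2, fun hh => absurd hh h⟩
    have hdz2 : G.dist z2 z2' = 1 := adj_dist_one h2
    have cz2 := SimpleGraph.dist_comm (G := G) (u := z2') (v := z2)
    by_cases hSμ : G.dist μ y = G.dist μ x + 1
    · -- μ on the positive side; replace z2 by z2'
      have g1 : G.dist μ z2' + 1 = G.dist μ z2 := by
        rcases dichot hG h2 μ with h | h
        · exfalso
          have hbet : G.dist μ z2 + G.dist z2 z2' = G.dist μ z2' := by omega
          exact hS2 (between hG hxy hSμ hS2' hbet)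
        · omega
      have g2 : G.dist z1 z2' + 1 = G.dist z1 z2 := by
        rcases dichot hG h2 z1 with h | h
        · exfalso
          have hbet : G.dist z1 z2 + G.dist z2 z2' = G.dist z1 z2' := by omega
          exact hS2 (between hG hxy hs1 hS2' hbet)
        · omega
      have hb' : G.dist z1 μ + G.dist μ z2' = G.dist z1 z2' := by omega
      obtain ⟨μ', hadj, hA, hB⟩ := car_convex₀ hG hxy _ z1 z2' μ z1' z2 rfl h1 h2.symm
        hs1 hS2' hs1' hs2 hb'
      exact ⟨μ', hadj, fun hiff => side_not_both (hiff.mp hA) hB⟩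
    · -- μ on the negative side; replace z1 by z1'
      have hμ : G.dist μ x = G.dist μ y + 1 := not_side hG hxy hSμ
      have hdz1 : G.dist z1 z1' = 1 := adj_dist_one h1
      have cz1 := SimpleGraph.dist_comm (G := G) (u := z1') (v := z1)
      have g1 : G.dist z1' μ + 1 = G.dist z1 μ := by
        have cμ := SimpleGraph.dist_comm (G := G) (u := μ) (v := z1)
        have cμ' := SimpleGraph.dist_comm (G := G) (u := μ) (v := z1')
        rcases dichot hG h1 μ with h | h
        · exfalso
          have hbet : G.dist μ z1 + G.dist z1 z1' = G.dist μ z1' := by omega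
          exact side_not_both hs1 (between' hG hxy hμ hs1' hbet)
        · omega
      have g2 : G.dist z1' z2 + 1 = G.dist z1 z2 := by
        have cz := SimpleGraph.dist_comm (G := G) (u := z2) (v := z1)
        have cz' := SimpleGraph.dist_comm (G := G) (u := z2) (v := z1')
        rcases dichot hG h1 z2 with h | h
        · exfalso
          have hbet : G.dist z2 z1 + G.dist z1 z1' = G.dist z2 z1' := by omega
          exact side_not_both hs1 (between' hG hxy hs2 hs1' hbet)
        · omega
      have hb' : G.dist z1' μ + G.dist μ z2 = G.dist z1' z2 := by omega
      obtain ⟨μ', hadj, hA, hB⟩ := car_convex₀ hG hxy.symm _ z1' z2 μ z1 z2' rfl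
        h1.symm h2 hs1' hs2 hs1 hS2' hb'
      exact ⟨μ', hadj, fun hiff => side_not_both (hiff.mpr hB) hA⟩

/-- Carrier convexity: a vertex on a geodesic between two carrier vertices is in the carrier. -/
lemma car_convex (hG : IsMedianGraph G) {x y : V} (hxy : G.Adj x y)
    {z1 z2 μ z1' z2' : V} (h1 : G.Adj z1 z1') (h2 : G.Adj z2 z2')
    (hc1 : ¬(G.dist z1 y = G.dist z1 x + 1 ↔ G.dist z1' y = G.dist z1' x + 1))
    (hc2 : ¬(G.dist z2 y = G.dist z2 x + 1 ↔ G.dist z2' y = G.dist z2' x + 1))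
    (hb : G.dist z1 μ + G.dist μ z2 = G.dist z1 z2) :
    ∃ μ', G.Adj μ μ' ∧
      ¬(G.dist μ y = G.dist μ x + 1 ↔ G.dist μ' y = G.dist μ' x + 1) := by
  by_cases hS1 : G.dist z1 y = G.dist z1 x + 1
  · have hs1' : G.dist z1' x = G.dist z1' y + 1 := by
      apply not_side hG hxy
      intro h
      exact hc1 ⟨fun _ => h, fun _ => hS1⟩
    exact car_convexS hG hxy h1 h2 hS1 hs1' hc2 hb
  · have hs1 : G.dist z1 x = G.dist z1 y + 1 := not_side hG hxy hS1
    have hs1' : G.dist z1' y = G.dist z1' x + 1 := by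
      by_contra h
      exact hc1 ⟨fun hh => absurd hh hS1, fun hh => absurd hh h⟩
    have hc2' : ¬(G.dist z2 x = G.dist z2 y + 1 ↔ G.dist z2' x = G.dist z2' y + 1) := by
      intro hiff
      apply hc2
      constructor
      · intro ha
        rcases dichot hG hxy z2' with hbb | hbb
        · exact hbb
        · exact absurd (hiff.mpr hbb) (by omega)
      · intro ha
        rcases dichot hG hxy z2 with hbb | hbb
        · exact hbb
        · exact absurd (hiff.mp hbb) (by omega)
    obtain ⟨μ', hadj, hniff⟩ := car_convexS hG hxy.symm h1 h2 hs1 hs1' hc2' hb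
    exact ⟨μ', hadj, side_niff hG hxy hniff⟩

end MedianAux

namespace MedianAux

variable {V : Type*} {G : SimpleGraph V}

/-- The cut of a hyperplane can be measured from any of its edges. -/
lemma cut_transfer (hG : IsMedianGraph G) {x y p q : V} (hxy : G.Adj x y)
    (hpq : G.Adj p q) (hp : G.dist p y = G.dist p x + 1) (hq : G.dist q x = G.dist q y + 1)
    (z : V) : (G.dist z y = G.dist z x + 1) ↔ (G.dist z q = G.dist z p + 1) := by
  have hc := hG.1
  have hdpq : G.dist p q = 1 := adj_dist_one hpq
  have cqp := SimpleGraph.dist_comm (G := G) (u := q) (v := p)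
  constructor
  · intro hz
    rcases dichot hG hpq z with h | h
    · exact h
    · exfalso
      have hbet : G.dist z q + G.dist q p = G.dist z p := by omega
      exact side_not_both (between hG hxy hz hp hbet) hq
  · intro hz
    rcases dichot hG hxy z with h | h
    · exact h
    · exfalso
      have hbet : G.dist z p + G.dist p q = G.dist z q := by omega
      exact side_not_both hp (between' hG hxy h hq hbet)

/-- One step of the ladder along the carrier of the hyperplane of `(x, y)`. -/
lemma ladder_step (hG : IsMedianGraph G) {x y : V} (hxy : G.Adj x y) {v yv a c : V} {n : ℕ}
    (hvy : G.Adj v yv) (hac : G.Adj a c)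
    (hSv : G.dist v y = G.dist v x + 1) (hSyv : G.dist yv x = G.dist yv y + 1)
    (hSa : G.dist a y = G.dist a x + 1) (hSc : G.dist c x = G.dist c y + 1)
    (hd : G.dist v a = n + 1) :
    ∃ s c1, G.Adj a s ∧ G.Adj c c1 ∧ G.Adj s c1 ∧
      (G.dist s y = G.dist s x + 1) ∧ (G.dist c1 x = G.dist c1 y + 1) ∧
      G.dist v s = n ∧ G.dist c s = 2 ∧ G.dist c1 a = 2 := by
  have hc' := hG.1
  have hdv : G.dist v yv = 1 := adj_dist_one hvy
  have hdac : G.dist a c = 1 := adj_dist_one hac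
  have cva := SimpleGraph.dist_comm (G := G) (u := a) (v := v)
  have f1 : G.dist yv a = n + 2 := by
    have cya := SimpleGraph.dist_comm (G := G) (u := a) (v := yv)
    rcases dichot hG hvy a with h | h
    · omega
    · exfalso
      have hbet : G.dist v yv + G.dist yv a = G.dist v a := by omega
      exact side_not_both (between hG hxy hSv hSa hbet) hSyv
  have f2 : G.dist v c = n + 2 := by
    rcases dichot hG hac v with h | h
    · omega
    · exfalso
      have hbet : G.dist v c + G.dist c a = G.dist v a := by
        have := SimpleGraph.dist_comm (G := G) (u := c) (v := a)
        omega
      exact side_not_both (between hG hxy hSv hSa hbet) hSc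
  have f3 : G.dist yv c = n + 1 := by
    have cyc := SimpleGraph.dist_comm (G := G) (u := c) (v := yv)
    have cvc := SimpleGraph.dist_comm (G := G) (u := c) (v := v)
    have htri := tri hc' yv v c
    rcases dichot hG hvy c with h | h
    · exfalso
      have hbet : G.dist yv v + G.dist v c = G.dist yv c := by
        have := SimpleGraph.dist_comm (G := G) (u := yv) (v := v)
        omega
      exact side_not_both hSv (between' hG hxy hSyv hSc hbet)
    · omega
  have f3' : G.dist c yv = n + 1 := by
    have := SimpleGraph.dist_comm (G := G) (u := c) (v := yv); omega
  obtain ⟨c1, hcc1, hc1yv⟩ := exists_next hc' f3'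
  have hSc1 : G.dist c1 x = G.dist c1 y + 1 := by
    apply between' hG hxy hSyv hSc
    have cA := SimpleGraph.dist_comm (G := G) (u := yv) (v := c1)
    have cB := SimpleGraph.dist_comm (G := G) (u := yv) (v := c)
    have cC := SimpleGraph.dist_comm (G := G) (u := c1) (v := c)
    have := adj_dist_one hcc1
    omega
  have f4 : G.dist v c1 = n + 1 := by
    have t1 := tri hc' v yv c1
    have t2 := tri hc' v c1 c
    have hdcc1 := adj_dist_one hcc1
    have c1' := SimpleGraph.dist_comm (G := G) (u := yv) (v := c1)
    have c2' := SimpleGraph.dist_comm (G := G) (u := c1) (v := c)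
    omega
  have hne : a ≠ c1 := by
    intro h; rw [h] at hSa; omega
  obtain ⟨s, has, hc1s, hvs2⟩ := quad hG (x := v) hac.symm hcc1 hne (by omega) (by omega)
  have hvs : G.dist v s = n := by omega
  have hdas : G.dist a s = 1 := adj_dist_one has
  have hSs : G.dist s y = G.dist s x + 1 := by
    apply between hG hxy hSv hSa
    have := SimpleGraph.dist_comm (G := G) (u := s) (v := a)
    omega
  have hcs : G.dist c s = 2 := by
    have t1 := tri hc' c c1 s
    have hdcc1 := adj_dist_one hcc1
    have hdc1s := adj_dist_one hc1s
    have hne0 : G.dist c s ≠ 0 := by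
      intro h0
      have : c = s := (dist_zero_iff hc').mp h0
      rw [this] at hSc; omega
    have hne1 : G.dist c s ≠ 1 := by
      intro h1
      have hadj' : G.Adj c s := SimpleGraph.dist_eq_one_iff_adj.mp h1
      rcases dichot hG hadj' v with h | h <;> omega
    omega
  have hc1a : G.dist c1 a = 2 := by
    have t1 := tri hc' c1 s a
    have hdc1s := adj_dist_one hc1s
    have csa := SimpleGraph.dist_comm (G := G) (u := s) (v := a)
    have hne0 : G.dist c1 a ≠ 0 := by
      intro h0
      have : c1 = a := (dist_zero_iff hc').mp h0
      rw [this] at hSc1; omega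
    have hne1 : G.dist c1 a ≠ 1 := by
      intro h1
      have hadj' : G.Adj c1 a := SimpleGraph.dist_eq_one_iff_adj.mp h1
      rcases dichot hG hadj' v with h | h <;> omega
    omega
  exact ⟨s, c1, has, hcc1, hc1s.symm, hSs, hSc1, hvs, hcs, hc1a⟩

/-- Ladder transport: a hyperplane separating two carrier vertices of `w` is transverse to
the hyperplane of `(x, y)`. -/
lemma ladder (hG : IsMedianGraph G) {x y g1 g2 : V} (hxy : G.Adj x y) (hg : G.Adj g1 g2) :
    ∀ n (v yv a c : V), G.Adj v yv → G.Adj a c →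
    (G.dist v y = G.dist v x + 1) → (G.dist yv x = G.dist yv y + 1) →
    (G.dist a y = G.dist a x + 1) → (G.dist c x = G.dist c y + 1) →
    G.dist v a = n →
    ((G.dist v g2 = G.dist v g1 + 1 ↔ G.dist a g2 = G.dist a g1 + 1) ∨
      Transverse G {f | G.Adj f.1 f.2 ∧ Theta G (g1, g2) f}
        {f | G.Adj f.1 f.2 ∧ Theta G (x, y) f}) := by
  have hc' := hG.1
  intro n
  induction n with
  | zero =>
    intro v yv a c hvy hac hSv hSyv hSa hSc hd
    have : v = a := (dist_zero_iff hc').mp hd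
    rw [this]
    exact Or.inl Iff.rfl
  | succ n ih =>
    intro v yv a c hvy hac hSv hSyv hSa hSc hd
    obtain ⟨s, c1, has, hcc1, hsc1, hSs, hSc1, hvs, hcs2, hc1a2⟩ :=
      ladder_step hG hxy hvy hac hSv hSyv hSa hSc hd
    rcases ih v yv s c1 hvy hsc1 hSv hSyv hSs hSc1 hvs with hiff | hT
    · by_cases hst : (G.dist s g2 = G.dist s g1 + 1) ↔ (G.dist a g2 = G.dist a g1 + 1)
      · exact Or.inl (hiff.trans hst)
      · right
        have hdca : G.dist c a = 1 := by
          have := SimpleGraph.dist_comm (G := G) (u := a) (v := c)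
          have := adj_dist_one hac; omega
        have hdc1s : G.dist c1 s = 1 := by
          have := SimpleGraph.dist_comm (G := G) (u := s) (v := c1)
          have := adj_dist_one hsc1; omega
        have hdas : G.dist a s = 1 := adj_dist_one has
        have hdcc1' : G.dist c c1 = 1 := adj_dist_one hcc1
        have hmemw_ac : (a, c) ∈ {f : V × V | G.Adj f.1 f.2 ∧ Theta G (x, y) f} := by
          refine ⟨hac, (theta_char hG hxy).mpr ?_⟩
          intro hiff'
          exact side_not_both (hiff'.mp hSa) hSc
        have hmemw_sc1 : (s, c1) ∈ {f : V × V | G.Adj f.1 f.2 ∧ Theta G (x, y) f} := by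
          refine ⟨hsc1, (theta_char hG hxy).mpr ?_⟩
          intro hiff'
          exact side_not_both (hiff'.mp hSs) hSc1
        by_cases hSta : G.dist a g2 = G.dist a g1 + 1
        · have hSts : G.dist s g1 = G.dist s g2 + 1 := by
            apply not_side hG hg
            intro h
            exact hst ⟨fun _ => hSta, fun _ => h⟩
          have hStc : G.dist c g2 = G.dist c g1 + 1 := by
            rw [cut_transfer hG hg has hSta hSts c]
            omega
          have hStc1 : ¬ (G.dist c1 g2 = G.dist c1 g1 + 1) := by
            rw [cut_transfer hG hg has hSta hSts c1]
            omega
          refine ⟨a, s, c, c1, ⟨has, (theta_char hG hg).mpr ?_⟩,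
            ⟨hcc1, (theta_char hG hg).mpr ?_⟩, hmemw_ac, hmemw_sc1,
            has, hcc1, hac, hsc1⟩
          · intro hiff'
            exact side_not_both (hiff'.mp hSta) hSts
          · intro hiff'
            exact hStc1 (hiff'.mp hStc)
        · have hSts : G.dist s g2 = G.dist s g1 + 1 := by
            rcases dichot hG hg s with h | h
            · exact h
            · exfalso
              apply hst
              constructor
              · intro hh; omega
              · intro hh; exact absurd hh hSta
          have hSta' : G.dist a g1 = G.dist a g2 + 1 := not_side hG hg hSta
          have hStc1 : G.dist c1 g2 = G.dist c1 g1 + 1 := by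
            rw [cut_transfer hG hg has.symm hSts hSta' c1]
            have := SimpleGraph.dist_comm (G := G) (u := s) (v := a)
            omega
          have hStc : ¬ (G.dist c g2 = G.dist c g1 + 1) := by
            rw [cut_transfer hG hg has.symm hSts hSta' c]
            have := SimpleGraph.dist_comm (G := G) (u := s) (v := a)
            have := SimpleGraph.dist_comm (G := G) (u := c) (v := s)
            omega
          refine ⟨a, s, c, c1, ⟨has, (theta_char hG hg).mpr ?_⟩,
            ⟨hcc1, (theta_char hG hg).mpr ?_⟩, hmemw_ac, hmemw_sc1,
            has, hcc1, hac, hsc1⟩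
          · intro hiff'
            exact side_not_both (hiff'.mpr hSts) hSta'
          · intro hiff'
            exact hStc (hiff'.mpr hStc1)
    · exact Or.inr hT

end MedianAux

namespace MedianAux

variable {V : Type*} {G : SimpleGraph V}

lemma theta_set_swap (x y : V) :
    {f : V × V | G.Adj f.1 f.2 ∧ Theta G (x, y) f} =
      {f : V × V | G.Adj f.1 f.2 ∧ Theta G (y, x) f} := by
  ext ⟨p, q⟩
  simp only [Set.mem_setOf_eq]
  unfold Theta
  dsimp only
  constructor <;> rintro ⟨h1, h2⟩ <;> exact ⟨h1, by omega⟩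

/-- The carrier predicate for the hyperplane determined by the edge `(x, y)`. -/
def CarP (G : SimpleGraph V) (x y z : V) : Prop :=
  ∃ z', G.Adj z z' ∧
    ¬((G.dist z y = G.dist z x + 1) ↔ (G.dist z' y = G.dist z' x + 1))

end MedianAux

open MedianAux in
theorem not_mem_Ical' (G : SimpleGraph V) (hG : IsMedianGraph G)
    (w u : Set (V × V)) (hw : IsHyperplane G w) (hu : IsHyperplane G u)
    (hnot : u ∉ Ical G w) (hc : Contact G u w) :
    ¬ Transverse G u w ∨ ∃ t, IsHyperplane G t ∧ Transverse G t w ∧ ¬ Transverse G u t := by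
  classical
  have hconn := hG.1
  obtain ⟨eu, heu, hu_eq⟩ := hu
  obtain ⟨ew, hew, hw_eq⟩ := hw
  by_contra hcon
  push_neg at hcon
  obtain ⟨HT, HB⟩ := hcon
  have humem : ∀ p q : V, ((p, q) ∈ u ↔ (G.Adj p q ∧
      ¬((G.dist p eu.2 = G.dist p eu.1 + 1) ↔ (G.dist q eu.2 = G.dist q eu.1 + 1)))) := by
    intro p q
    rw [hu_eq]
    constructor
    · rintro ⟨h1, h2⟩
      exact ⟨h1, (theta_char hG heu).mp h2⟩
    · rintro ⟨h1, h2⟩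
      exact ⟨h1, (theta_char hG heu).mpr h2⟩
  have hwmem : ∀ p q : V, ((p, q) ∈ w ↔ (G.Adj p q ∧
      ¬((G.dist p ew.2 = G.dist p ew.1 + 1) ↔ (G.dist q ew.2 = G.dist q ew.1 + 1)))) := by
    intro p q
    rw [hw_eq]
    constructor
    · rintro ⟨h1, h2⟩
      exact ⟨h1, (theta_char hG hew).mp h2⟩
    · rintro ⟨h1, h2⟩
      exact ⟨h1, (theta_char hG hew).mpr h2⟩
  have hnotu : ∃ v : V, AdjTo G w v ∧ ¬ AdjTo G u v := by
    by_contra hall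
    push_neg at hall
    exact hnot ⟨⟨eu, heu, hu_eq⟩, hall⟩
  obtain ⟨v0, hv0w, hv0u⟩ := hnotu
  obtain ⟨a, b, c0, d0, hab, hcd, hac, hbd, hadjab, hadjcd, hadjac, hadjbd⟩ := HT
  have hCar_a : CarP G eu.1 eu.2 a :=
    ⟨b, ((humem a b).mp hab).1, ((humem a b).mp hab).2⟩
  have hCar_c : CarP G eu.1 eu.2 c0 :=
    ⟨d0, ((humem c0 d0).mp hcd).1, ((humem c0 d0).mp hcd).2⟩
  have hCarAdj : ∀ z, CarP G eu.1 eu.2 z → AdjTo G u z := by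
    rintro z ⟨z', h1, h2⟩
    exact ⟨(z, z'), (humem z z').mpr ⟨h1, h2⟩, Or.inl rfl⟩
  have hv0Car : ¬ CarP G eu.1 eu.2 v0 := fun h => hv0u (hCarAdj _ h)
  have hex : ∃ n : ℕ, ∃ z, CarP G eu.1 eu.2 z ∧ G.dist v0 z = n :=
    ⟨_, a, hCar_a, rfl⟩
  obtain ⟨p, hpCar, hpd⟩ := Nat.find_spec hex
  set m := Nat.find hex with hm
  have hmin : ∀ z, CarP G eu.1 eu.2 z → m ≤ G.dist v0 z := by
    intro z hz
    by_contra hlt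
    push_neg at hlt
    exact Nat.find_min hex hlt ⟨z, hz, rfl⟩
  have hm1 : 1 ≤ m := by
    by_contra h
    push_neg at h
    have hm0 : G.dist v0 p = 0 := by omega
    have hv0p : v0 = p := (dist_zero_iff hconn).mp hm0
    exact hv0Car (by rw [hv0p]; exact hpCar)
  obtain ⟨x1, hx1adj, hx1d⟩ := exists_next hconn (show G.dist v0 p = (m - 1) + 1 by omega)
  have hd01 : G.dist v0 x1 = 1 := adj_dist_one hx1adj
  have step1 : ∀ z, CarP G eu.1 eu.2 z → G.dist z v0 = G.dist z x1 + 1 := by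
    intro z hz
    obtain ⟨mz, ⟨e1, e2, e3⟩, -⟩ := hG.2 v0 p z
    have hmzCar : CarP G eu.1 eu.2 mz := by
      obtain ⟨p', h1, h2⟩ := hpCar
      obtain ⟨z', h3, h4⟩ := hz
      obtain ⟨μ', h5, h6⟩ := car_convex hG heu h1 h3 h2 h4 e3
      exact ⟨μ', h5, h6⟩
    have hge := hmin mz hmzCar
    have hmzp : mz = p := by
      apply (dist_zero_iff hconn).mp
      omega
    rw [hmzp] at e2
    have t1 := tri hconn v0 x1 z
    have t2 := tri hconn x1 p z
    have czv := SimpleGraph.dist_comm (G := G) (u := z) (v := v0)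
    have czx := SimpleGraph.dist_comm (G := G) (u := z) (v := x1)
    rcases dichot hG hx1adj z with h | h
    · exfalso; omega
    · exact h
  have step2 : ¬ Transverse G u {f : V × V | G.Adj f.1 f.2 ∧ Theta G (v0, x1) f} := by
    rintro ⟨A, B, C, D, hAB, hCD, hAC, hBD, -, -, -, -⟩
    have hA : CarP G eu.1 eu.2 A :=
      ⟨B, ((humem A B).mp hAB).1, ((humem A B).mp hAB).2⟩
    have hC : CarP G eu.1 eu.2 C :=
      ⟨D, ((humem C D).mp hCD).1, ((humem C D).mp hCD).2⟩
    have h1 := step1 A hA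
    have h2 := step1 C hC
    obtain ⟨-, hth⟩ := hAC
    exact (theta_char hG hx1adj).mp hth ⟨fun h => by omega, fun h => by omega⟩
  have hthyp : IsHyperplane G {f : V × V | G.Adj f.1 f.2 ∧ Theta G (v0, x1) f} :=
    ⟨(v0, x1), hx1adj, rfl⟩
  have hStv0 : G.dist v0 x1 = G.dist v0 v0 + 1 := by
    rw [(dist_zero_iff hconn).mpr rfl]
    omega
  have hSta : G.dist a v0 = G.dist a x1 + 1 := step1 a hCar_a
  have hStc : G.dist c0 v0 = G.dist c0 x1 + 1 := step1 c0 hCar_c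
  have cav := SimpleGraph.dist_comm (G := G) (u := a) (v := v0)
  have cax := SimpleGraph.dist_comm (G := G) (u := a) (v := x1)
  have ccv := SimpleGraph.dist_comm (G := G) (u := c0) (v := v0)
  have ccx := SimpleGraph.dist_comm (G := G) (u := c0) (v := x1)
  obtain ⟨yv0, hyadj, hyniff⟩ : ∃ yv0, G.Adj v0 yv0 ∧
      ¬((G.dist v0 ew.2 = G.dist v0 ew.1 + 1) ↔ (G.dist yv0 ew.2 = G.dist yv0 ew.1 + 1)) := by
    obtain ⟨f, hfw, hfor⟩ := hv0w
    rcases f with ⟨fv, fy⟩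
    have hfmem := (hwmem fv fy).mp hfw
    rcases hfor with h | h
    · subst h
      exact ⟨fy, hfmem.1, hfmem.2⟩
    · subst h
      exact ⟨fv, hfmem.1.symm, fun hiff => hfmem.2 hiff.symm⟩
  have hacw := (hwmem a c0).mp hac
  have step3 : Transverse G {f : V × V | G.Adj f.1 f.2 ∧ Theta G (v0, x1) f} w := by
    by_cases hSwv0 : G.dist v0 ew.2 = G.dist v0 ew.1 + 1
    · have hSwy : G.dist yv0 ew.1 = G.dist yv0 ew.2 + 1 :=
        not_side hG hew (fun h => hyniff ⟨fun _ => h, fun _ => hSwv0⟩)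
      by_cases hSwa : G.dist a ew.2 = G.dist a ew.1 + 1
      · have hSwc : G.dist c0 ew.1 = G.dist c0 ew.2 + 1 :=
          not_side hG hew (fun h => hacw.2 ⟨fun _ => h, fun _ => hSwa⟩)
        rcases ladder hG hew hx1adj (G.dist v0 a) v0 yv0 a c0 hyadj hadjac
          hSwv0 hSwy hSwa hSwc rfl with hiff | hT
        · exfalso
          have := hiff.mp hStv0
          omega
        · rw [hw_eq]
          exact hT
      · have hSwc : G.dist c0 ew.2 = G.dist c0 ew.1 + 1 := by
          by_contra h
          exact hacw.2 ⟨fun hh => absurd hh hSwa, fun hh => absurd hh h⟩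
        have hSwa' : G.dist a ew.1 = G.dist a ew.2 + 1 := not_side hG hew hSwa
        rcases ladder hG hew hx1adj (G.dist v0 c0) v0 yv0 c0 a hyadj hadjac.symm
          hSwv0 hSwy hSwc hSwa' rfl with hiff | hT
        · exfalso
          have := hiff.mp hStv0
          omega
        · rw [hw_eq]
          have hTs := hT
          rw [show ({f : V × V | G.Adj f.1 f.2 ∧ Theta G (ew.1, ew.2) f}) =
            {f : V × V | G.Adj f.1 f.2 ∧ Theta G ew f} from rfl] at hTs
          exact hTs
    · have hSwv0' : G.dist v0 ew.1 = G.dist v0 ew.2 + 1 := not_side hG hew hSwv0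
      have hSwy : G.dist yv0 ew.2 = G.dist yv0 ew.1 + 1 := by
        by_contra h
        exact hyniff ⟨fun hh => absurd hh hSwv0, fun hh => absurd hh h⟩
      by_cases hSwa : G.dist a ew.1 = G.dist a ew.2 + 1
      · have hSwc : G.dist c0 ew.2 = G.dist c0 ew.1 + 1 := by
          by_contra h
          apply hacw.2
          exact ⟨fun hh => absurd hh (by omega), fun hh => absurd hh (by omega)⟩
        rcases ladder hG hew.symm hx1adj (G.dist v0 a) v0 yv0 a c0 hyadj hadjac
          hSwv0' hSwy hSwa hSwc rfl with hiff | hT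
        · exfalso
          have := hiff.mp hStv0
          omega
        · rw [hw_eq]
          rw [theta_set_swap ew.2 ew.1] at hT
          exact hT
      · have hSwa2 : G.dist a ew.2 = G.dist a ew.1 + 1 := by
          rcases dichot hG hew a with h | h
          · exact h
          · exact absurd h hSwa
        have hSwc : G.dist c0 ew.1 = G.dist c0 ew.2 + 1 := by
          apply not_side hG hew
          intro h
          exact hacw.2 ⟨fun _ => h, fun _ => hSwa2⟩
        rcases ladder hG hew.symm hx1adj (G.dist v0 c0) v0 yv0 c0 a hyadj hadjac.symm
          hSwv0' hSwy hSwc hSwa2 rfl with hiff | hT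
        · exfalso
          have := hiff.mp hStv0
          omega
        · rw [hw_eq]
          rw [theta_set_swap ew.2 ew.1] at hT
          exact hT
  exact step2 (HB _ hthyp step3)

/-- if `u ∉ I(w)` but `u` is in contact with `w`, then either `u` is not
transverse to `w`, or some hyperplane `t` transverse to `w` is not transverse to `u`. -/
theorem not_mem_Ical (G : SimpleGraph V) (hG : IsMedianGraph G)
    (hdim : ∃ n : ℕ, ∀ S : Finset (Set (V × V)), (∀ h ∈ S, IsHyperplane G h) →
      (S : Set (Set (V × V))).Pairwise (Transverse G) → S.card ≤ n)
    (w u : Set (V × V)) (hw : IsHyperplane G w) (hu : IsHyperplane G u)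
    (hnot : u ∉ Ical G w) (hc : Contact G u w) :
    ¬ Transverse G u w ∨ ∃ t, IsHyperplane G t ∧ Transverse G t w ∧ ¬ Transverse G u t := by
  exact not_mem_Ical' G hG w u hw hu hnot hc
end
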